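/- arXiv:math/0112085 — 7 statements merged into one kernel-verified Lean document; each statement's English description precedes it below -/
import Mathlib

section
/- Let (n_k) be a strictly increasing sequence of positive integers and a > 0. If there exists a sequence of positive reals (r_k) such that for every δ > 0 the intervals of radius δ/n_k centered at the points (ln a)/n_k − (ln r_k)/n_k cover (0, ∞), then the series ∑ 1/n_k diverges. -/
theorem stmt_1 (n : ℕ → ℕ) (hmono : StrictMono n) (hpos : ∀ k, 0 < n k)
    (a : ℝ) (ha : 0 < a)
    (h : ∃ r : ℕ → ℝ, (∀ k, 0 < r k) ∧
      ∀ s : ℝ, 0 < s → ∀ δ : ℝ, 0 < δ →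
        ∃ k, |s - (Real.log a / n k - Real.log (r k) / n k)| < δ / n k) :
    ¬ Summable (fun k => 1 / (n k : ℝ)) := by
  obtain ⟨r, hr, hcov⟩ := h
  intro hs
  set f : ℕ → ℝ := fun k => 1 / (n k : ℝ) with hf
  have hfnn : ∀ k, 0 ≤ f k := fun k => by positivity
  set S := ∑' k, f k with hS
  have hSnn : 0 ≤ S := tsum_nonneg hfnn
  set δ : ℝ := 1 / (4 * (S + 1)) with hδ
  have hδpos : 0 < δ := by positivity
  set c : ℕ → ℝ := fun k => Real.log a / n k - Real.log (r k) / n k with hc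
  have hsub : Set.Ioo (0:ℝ) 1 ⊆ ⋃ k, Metric.ball (c k) (δ / n k) := by
    intro s hsmem
    obtain ⟨k, hk⟩ := hcov s hsmem.1 δ hδpos
    exact Set.mem_iUnion.2 ⟨k, by simp only [Metric.mem_ball, Real.dist_eq, hc]; convert hk using 2⟩
  have h1 : MeasureTheory.volume (Set.Ioo (0:ℝ) 1) ≤
      ∑' k, MeasureTheory.volume (Metric.ball (c k) (δ / n k)) :=
    le_trans (MeasureTheory.measure_mono hsub) (MeasureTheory.measure_iUnion_le _)
  rw [Real.volume_Ioo] at h1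
  have hball : ∀ k, MeasureTheory.volume (Metric.ball (c k) (δ / n k))
      = ENNReal.ofReal ((2 * δ) * f k) := by
    intro k
    rw [Real.volume_ball]
    congr 1
    simp only [hf]
    ring
  simp_rw [hball] at h1
  have hsum2 : Summable (fun k => (2 * δ) * f k) := hs.mul_left _
  have hnn2 : ∀ k, 0 ≤ (2 * δ) * f k := fun k => by
    have := hfnn k; positivity
  rw [← ENNReal.ofReal_tsum_of_nonneg hnn2 hsum2] at h1
  have h2 : (1 : ℝ) - 0 ≤ ∑' k, (2 * δ) * f k := by
    have := (ENNReal.ofReal_le_ofReal_iff (tsum_nonneg hnn2)).1 h1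
    linarith [this]
  rw [tsum_mul_left] at h2
  have hSlt : S < S + 1 := by linarith
  have : (2 * δ) * S ≤ (2 * δ) * (S + 1) := by
    apply mul_le_mul_of_nonneg_left (by linarith) (by positivity)
  have hval : (2 * δ) * (S + 1) = 1 / 2 := by
    field_simp [hδ]
    have hδS : δ * (4 * (S + 1)) = 1 := by
      rw [hδ]; exact one_div_mul_cancel (by positivity)
    linarith
  linarith
end

section
/- Define j : {n ∈ ℕ : n ≥ 20} → ℕ by j(k) = k + 1 − ⌊n ln ln n⌋, where n is the unique positive integer with ⌊n ln ln n⌋ ≤ k < ⌊(n+1) ln ln (n+1)⌋. Then j(k) < ⌊ln ln k⌋ + 3 for all k ≥ 20. -/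
set_option maxHeartbeats 1600000

theorem stmt_4 (j : ℕ → ℕ)
    (hj : ∀ k, 20 ≤ k → ∀ n : ℕ,
      Nat.floor ((n : ℝ) * Real.log (Real.log n)) ≤ k →
      k < Nat.floor (((n : ℝ) + 1) * Real.log (Real.log ((n : ℝ) + 1))) →
      j k = k + 1 - Nat.floor ((n : ℝ) * Real.log (Real.log n))) :
    ∀ k, 20 ≤ k → j k < Nat.floor (Real.log (Real.log k)) + 3 := by
  intro k hk
  classical
  have he_lt : Real.exp 1 < 2.7182818286 := Real.exp_one_lt_d9
  have he_gt : 2.7182818283 < Real.exp 1 := Real.exp_one_gt_d9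
  have hlog2 : 0.6931471803 < Real.log 2 := Real.log_two_gt_d9
  have hlog2' : Real.log 2 < 0.6931471808 := Real.log_two_lt_d9
  have h16eq : Real.log 16 = 4 * Real.log 2 := by
    rw [show (16:ℝ) = 2^4 by norm_num, Real.log_pow]; push_cast; ring
  have h16lb : 2.7725887212 < Real.log 16 := by rw [h16eq]; linarith
  have h16ub : Real.log 16 < 2.7725887232 := by rw [h16eq]; linarith
  -- log monotone facts
  have hlogmono : ∀ m : ℕ, 16 ≤ m → Real.log 16 ≤ Real.log m := by
    intro m hm
    have hm16 : (16:ℝ) ≤ m := by exact_mod_cast hm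
    exact Real.log_le_log (by norm_num) hm16
  have hL : ∀ m : ℕ, 16 ≤ m → 1 ≤ Real.log (Real.log m) := by
    intro m hm
    have h1 := hlogmono m hm
    have h2 : 0 < Real.log m := by linarith
    rw [Real.le_log_iff_exp_le h2]
    linarith
  -- floor ((m) * L m) ≥ m for m ≥ 16
  have hfloor_ge : ∀ m : ℕ, 16 ≤ m → m ≤ Nat.floor ((m:ℝ) * Real.log (Real.log m)) := by
    intro m hm
    apply Nat.le_floor
    have h1 := hL m hm
    nlinarith [show (0:ℝ) ≤ m by positivity]
  -- floor (16 * L 16) ≤ 20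
  have hP16floor : Nat.floor ((16:ℝ) * Real.log (Real.log ((16:ℕ):ℝ))) ≤ 20 := by
    have hc : ((16:ℕ):ℝ) = (16:ℝ) := by norm_num
    rw [hc]
    have hpos : (0:ℝ) < Real.log 16 := by linarith
    have hlt : Real.log (Real.log 16) < 21/16 := by
      rw [Real.log_lt_iff_lt_exp hpos]
      have h5 : (1:ℝ) + 5/16 ≤ Real.exp (5/16) := by
        have := Real.add_one_le_exp (5/16 : ℝ); linarith
      have heq : Real.exp (21/16 : ℝ) = Real.exp 1 * Real.exp (5/16) := by
        rw [← Real.exp_add]; norm_num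
      nlinarith [Real.exp_pos (5/16:ℝ)]
    have h0 : (0:ℝ) ≤ 16 * Real.log (Real.log 16) := by
      have := hL 16 le_rfl
      rw [hc] at this
      nlinarith
    have : Nat.floor ((16:ℝ) * Real.log (Real.log 16)) < 21 := by
      rw [Nat.floor_lt h0]; push_cast; nlinarith
    omega
  have hdec : DecidablePred (fun m : ℕ => 16 ≤ m ∧ Nat.floor ((m:ℝ) * Real.log (Real.log m)) ≤ k) :=
    fun _ => instDecidableAnd
  set n := Nat.findGreatest (fun m : ℕ => 16 ≤ m ∧ Nat.floor ((m:ℝ) * Real.log (Real.log m)) ≤ k) k with hndef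
  have hP16 : 16 ≤ 16 ∧ Nat.floor (((16:ℕ):ℝ) * Real.log (Real.log ((16:ℕ):ℝ))) ≤ k :=
    ⟨le_rfl, le_trans hP16floor (by omega)⟩
  have hn16 : 16 ≤ n := by
    rw [hndef]; exact Nat.le_findGreatest (by omega) hP16
  have hPn : 16 ≤ n ∧ Nat.floor ((n:ℝ) * Real.log (Real.log n)) ≤ k := by
    rw [hndef]
    exact Nat.findGreatest_spec
      (P := fun m : ℕ => 16 ≤ m ∧ Nat.floor ((m:ℝ) * Real.log (Real.log m)) ≤ k)
      (by omega : 16 ≤ k) hP16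
  have hB : Nat.floor ((n:ℝ) * Real.log (Real.log n)) ≤ k := hPn.2
  have hnk : n ≤ k := le_trans (hfloor_ge n hn16) hB
  -- upper: k < floor ((n+1) L (n+1))
  have hA' : k < Nat.floor (((n+1:ℕ):ℝ) * Real.log (Real.log ((n+1:ℕ):ℝ))) := by
    rcases eq_or_lt_of_le hnk with heq | hlt
    · have h1 := hfloor_ge (n+1) (by omega)
      omega
    · have hng : ¬ (16 ≤ n+1 ∧ Nat.floor (((n+1:ℕ):ℝ) * Real.log (Real.log ((n+1:ℕ):ℝ))) ≤ k) := by
        apply Nat.findGreatest_is_greatest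
          (P := fun m : ℕ => 16 ≤ m ∧ Nat.floor ((m:ℝ) * Real.log (Real.log m)) ≤ k) (n := k)
        · rw [← hndef]; omega
        · omega
      by_contra hcon
      push_neg at hcon
      exact hng ⟨by omega, hcon⟩
  have hA : k < Nat.floor (((n:ℝ) + 1) * Real.log (Real.log ((n:ℝ) + 1))) := by
    push_cast at hA' ⊢
    exact hA'
  have hjeq : j k = k + 1 - Nat.floor ((n:ℝ) * Real.log (Real.log n)) := hj k hk n hB hA
  -- real-number estimates
  set a : ℝ := Real.log ((n:ℝ) + 1) with hadef
  set b : ℝ := Real.log n with hbdef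
  have hbb : 2.7725887212 < b := lt_of_lt_of_le h16lb (hlogmono n hn16)
  have hab : b ≤ a := by
    apply Real.log_le_log
    · have : (16:ℝ) ≤ (n:ℝ) := by exact_mod_cast hn16
      linarith
    · linarith [show (0:ℝ) ≤ (n:ℝ) by positivity]
  have hbpos : 0 < b := by linarith
  have hapos : 0 < a := by linarith
  have hnR : (16:ℝ) ≤ (n:ℝ) := by exact_mod_cast hn16
  -- a - b ≤ 1/n
  have hstep1 : a - b ≤ 1 / (n:ℝ) := by
    have hdiv : a - b = Real.log (((n:ℝ)+1) / n) := by
      rw [Real.log_div (by linarith) (by linarith)]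
    have hpos2 : (0:ℝ) < ((n:ℝ)+1)/n := by positivity
    have := Real.log_le_sub_one_of_pos hpos2
    rw [hdiv]
    have heq2 : ((n:ℝ)+1)/n - 1 = 1/n := by field_simp; ring
    linarith [heq2 ▸ this]
  -- La - Lb ≤ (a-b)/b
  have hstep2 : Real.log a - Real.log b ≤ (a - b) / b := by
    have hdiv : Real.log a - Real.log b = Real.log (a / b) := by
      rw [Real.log_div (by linarith) (by linarith)]
    have hpos2 : (0:ℝ) < a / b := by positivity
    have := Real.log_le_sub_one_of_pos hpos2
    rw [hdiv]
    have heq2 : a/b - 1 = (a-b)/b := by field_simp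
    linarith [heq2 ▸ this]
  have hstep3 : ((n:ℝ)+1) * (Real.log a - Real.log b) < 1 := by
    have h1 : (a - b)/b ≤ (1/(n:ℝ))/b := by gcongr
    have h2 : Real.log a - Real.log b ≤ (1/(n:ℝ))/b := le_trans hstep2 h1
    have hnb : (0:ℝ) < (n:ℝ) * b := by positivity
    have h3 : ((n:ℝ)+1) * ((1/(n:ℝ))/b) < 1 := by
      rw [div_div, mul_one_div, div_lt_one hnb]
      nlinarith
    calc ((n:ℝ)+1) * (Real.log a - Real.log b)
        ≤ ((n:ℝ)+1) * ((1/(n:ℝ))/b) := by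
          apply mul_le_mul_of_nonneg_left h2 (by linarith)
      _ < 1 := h3
  -- floors
  set A := Nat.floor (((n:ℝ)+1) * Real.log a) with hAdef
  set B := Nat.floor ((n:ℝ) * Real.log b) with hBdef
  have hLb1 : 1 ≤ Real.log b := hL n hn16
  have hLab : Real.log b ≤ Real.log a := Real.log_le_log hbpos hab
  have hAub : (A:ℝ) ≤ ((n:ℝ)+1) * Real.log a := Nat.floor_le (by nlinarith)
  have hBlb : (n:ℝ) * Real.log b - 1 < (B:ℝ) := Nat.sub_one_lt_floor _
  have hkA : k + 1 ≤ A := hA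
  have hjle : j k ≤ A - B := by
    rw [hjeq]
    exact Nat.sub_le_sub_right hkA _
  have hBA : B ≤ A := by omega
  have hjR : (j k : ℝ) ≤ (A:ℝ) - (B:ℝ) := by
    have : ((A - B : ℕ) : ℝ) = (A:ℝ) - B := by
      rw [Nat.cast_sub hBA]
    rw [← this]
    exact_mod_cast hjle
  -- log b ≤ log log k
  have hkpos : (0:ℝ) < (n:ℝ) := by linarith
  have hnkR : (n:ℝ) ≤ (k:ℝ) := by exact_mod_cast hnk
  have hbk : b ≤ Real.log k := Real.log_le_log hkpos hnkR
  have hLk : Real.log b ≤ Real.log (Real.log k) := Real.log_le_log (by linarith) hbk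
  have hmain : (j k : ℝ) < Real.log (Real.log k) + 2 := by
    nlinarith [hstep3, hAub, hBlb, hjR, hLk]
  have hfl : Real.log (Real.log k) < (Nat.floor (Real.log (Real.log k)) : ℝ) + 1 :=
    Nat.lt_floor_add_one _
  have : (j k : ℝ) < (Nat.floor (Real.log (Real.log k)) : ℝ) + 3 := by linarith
  exact_mod_cast this
end

section
/- Let (M_k)_{k≥20} be a strictly increasing sequence of positive integers with M_{k+1} − M_k → ∞, and let (r_k)_{k≥20} be a strictly decreasing sequence of positive reals with r_k → 0. Let (w_k)_{k≥20} be unit vectors in ℓ² such that w_k is supported on coordinates 0,…,M_{k+1}−M_k−1. Set d_k = √(r_k² − r_{k+1}²) and f = ∑_{k≥20} d_k S^{M_k} w_k, where S is the forward shift. Then f ∈ ℓ² and ‖B^{M_k} f‖ = r_k for all k ≥ 20. -/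
set_option maxHeartbeats 2000000 in
theorem stmt_7
    (B S : lp (fun _ : ℕ => ℂ) 2 →L[ℂ] lp (fun _ : ℕ => ℂ) 2)
    (hB : ∀ (g : lp (fun _ : ℕ => ℂ) 2) (n : ℕ), (B g : ℕ → ℂ) n = g (n + 1))
    (hS : ∀ g : lp (fun _ : ℕ => ℂ) 2,
      (S g : ℕ → ℂ) 0 = 0 ∧ ∀ n : ℕ, (S g : ℕ → ℂ) (n + 1) = g n)
    (M : ℕ → ℕ) (hMpos : ∀ k, 20 ≤ k → 0 < M k)
    (hMmono : ∀ k, 20 ≤ k → M k < M (k + 1))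
    (hMgap : Filter.Tendsto (fun k => (M (k + 1) : ℝ) - M k) Filter.atTop Filter.atTop)
    (r : ℕ → ℝ) (hrpos : ∀ k, 20 ≤ k → 0 < r k)
    (hrmono : ∀ k, 20 ≤ k → r (k + 1) < r k)
    (hr0 : Filter.Tendsto r Filter.atTop (nhds 0))
    (w : ℕ → lp (fun _ : ℕ => ℂ) 2) (hwnorm : ∀ k, 20 ≤ k → ‖w k‖ = 1)
    (hwsupp : ∀ k, 20 ≤ k → ∀ i : ℕ, M (k + 1) - M k ≤ i → (w k : ℕ → ℂ) i = 0)
    (d : ℕ → ℝ) (hd : ∀ k, d k = Real.sqrt (r k ^ 2 - r (k + 1) ^ 2)) :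
    ∃ f : lp (fun _ : ℕ => ℂ) 2,
      HasSum (fun k : ℕ => (d (k + 20) : ℂ) • ((S ^ M (k + 20)) (w (k + 20)))) f ∧
      ∀ k, 20 ≤ k → ‖(B ^ M k) f‖ = r k := by
  classical
  -- coordinates of powers of S
  have hSpow : ∀ (m : ℕ) (g : lp (fun _ : ℕ => ℂ) 2) (n : ℕ),
      ((S ^ m) g : ℕ → ℂ) n = if n < m then 0 else (g : ℕ → ℂ) (n - m) := by
    intro m
    induction m with
    | zero =>
      intro g n
      simp [pow_zero, ContinuousLinearMap.one_apply]
    | succ m ih =>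
      intro g n
      rw [pow_succ, ContinuousLinearMap.mul_apply, ih (S g) n]
      by_cases h1 : n < m
      · rw [if_pos h1, if_pos (by omega)]
      · rw [if_neg h1]
        by_cases h2 : n < m + 1
        · have hnm : n = m := by omega
          subst hnm
          rw [if_pos h2, Nat.sub_self, (hS g).1]
        · rw [if_neg h2]
          obtain ⟨t, ht⟩ : ∃ t, n - m = t + 1 := ⟨n - m - 1, by omega⟩
          rw [ht, (hS g).2 t]
          have he : t = n - (m + 1) := by omega
          rw [he]
  -- coordinates of powers of B
  have hBpow : ∀ (m : ℕ) (g : lp (fun _ : ℕ => ℂ) 2) (n : ℕ),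
      ((B ^ m) g : ℕ → ℂ) n = (g : ℕ → ℂ) (n + m) := by
    intro m
    induction m with
    | zero =>
      intro g n
      simp [pow_zero, ContinuousLinearMap.one_apply]
    | succ m ih =>
      intro g n
      rw [pow_succ', ContinuousLinearMap.mul_apply, hB ((B ^ m) g) n, ih g (n + 1)]
      have he : n + 1 + m = n + (m + 1) := by omega
      rw [he]
  -- S^m is isometric
  have hSnorm : ∀ (m : ℕ) (g : lp (fun _ : ℕ => ℂ) 2), ‖(S ^ m) g‖ = ‖g‖ := by
    intro m g
    have h2 : 0 < (2 : ENNReal).toReal := by norm_num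
    have hinj : Function.Injective (· + m : ℕ → ℕ) := add_left_injective m
    have hsupp : Function.support
        (fun x : ℕ => ‖((S ^ m) g : ℕ → ℂ) x‖ ^ (2 : ENNReal).toReal) ⊆ Set.range (· + m) := by
      intro x hx
      rcases lt_or_ge x m with hlt | hge
      · exfalso
        apply hx
        show ‖((S ^ m) g : ℕ → ℂ) x‖ ^ (2 : ENNReal).toReal = 0
        rw [hSpow m g x, if_pos hlt, norm_zero, Real.zero_rpow h2.ne']
      · exact ⟨x - m, by show x - m + m = x; omega⟩
    have e4 : ‖(S ^ m) g‖ ^ (2 : ENNReal).toReal = ‖g‖ ^ (2 : ENNReal).toReal := by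
      rw [lp.norm_rpow_eq_tsum h2 ((S ^ m) g), lp.norm_rpow_eq_tsum h2 g,
        ← hinj.tsum_eq hsupp]
      exact tsum_congr fun n => by
        rw [hSpow m g (n + m), if_neg (by omega), Nat.add_sub_cancel]
    have t2 : ((2 : ENNReal)).toReal = (2 : ℝ) := by norm_num
    rw [t2] at e4
    have hc : ∀ x : ℝ, x ^ (2 : ℝ) = x ^ (2 : ℕ) := fun x => by
      rw [← Real.rpow_natCast x 2]; norm_num
    rw [hc, hc] at e4
    have := congrArg Real.sqrt e4
    rwa [Real.sqrt_sq (norm_nonneg _), Real.sqrt_sq (norm_nonneg _)] at this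
  -- orthogonality from disjoint supports
  have horth : ∀ (g h : lp (fun _ : ℕ => ℂ) 2),
      (∀ n, (g : ℕ → ℂ) n = 0 ∨ (h : ℕ → ℂ) n = 0) → (inner ℂ g h : ℂ) = 0 := by
    intro g h hgh
    rw [lp.inner_eq_tsum]
    have hz : ∀ n : ℕ, (inner ℂ ((g : ℕ → ℂ) n) ((h : ℕ → ℂ) n) : ℂ) = 0 := by
      intro n
      rcases hgh n with h0 | h0 <;> rw [h0] <;> simp
    rw [tsum_congr hz, tsum_zero]
  -- monotonicity of M above 20
  have hMle : ∀ i j, 20 ≤ i → i < j → M (i + 1) ≤ M j := by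
    intro i j hi
    induction j with
    | zero => intro h; omega
    | succ j ih =>
      intro hij
      rcases Nat.lt_succ_iff_lt_or_eq.mp hij with h | h
      · exact le_trans (ih h) (hMmono j (by omega)).le
      · exact le_of_eq (by rw [h])
  have hMle' : ∀ i j, 20 ≤ i → i ≤ j → M i ≤ M j := by
    intro i j hi hij
    rcases eq_or_lt_of_le hij with rfl | h
    · exact le_rfl
    · exact le_trans (hMmono i hi).le (hMle i j hi h)
  -- the orthonormal families of shifted blocks
  have hON : ∀ (k c : ℕ), 20 ≤ k → (∀ j : ℕ, c ≤ M (j + k)) →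
      Orthonormal ℂ (fun j : ℕ => (S ^ (M (j + k) - c)) (w (j + k))) := by
    intro k c hk hc
    refine ⟨fun j => ?_, fun i j hij => ?_⟩
    · rw [hSnorm]
      exact hwnorm (j + k) (by omega)
    · apply horth
      intro n
      by_cases h1 : ((S ^ (M (i + k) - c)) (w (i + k)) : ℕ → ℂ) n = 0
      · exact Or.inl h1
      · right
        rw [hSpow (M (i + k) - c) (w (i + k)) n] at h1
        have hci := hc i
        have hb1 : ¬ (n < M (i + k) - c) := by
          intro hcon
          exact h1 (by rw [if_pos hcon])
        rw [if_neg hb1] at h1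
        have hb2 : n + c < M (i + k + 1) := by
          by_contra hcon
          exact h1 (hwsupp (i + k) (by omega) _ (by omega))
        rw [hSpow]
        rcases hij.lt_or_gt with hlt | hlt
        · have hle := hMle (i + k) (j + k) (by omega) (by omega)
          have hcj := hc j
          rw [if_pos (by omega)]
        · have hle := hMle (j + k) (i + k) (by omega) (by omega)
          have hcj := hc j
          have hmj := hMmono (j + k) (by omega)
          rw [if_neg (by omega)]
          exact hwsupp (j + k) (by omega) _ (by omega)
  -- norm of an orthonormal expansion
  have hkey : ∀ (u : ℕ → lp (fun _ : ℕ => ℂ) 2), Orthonormal ℂ u →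
      ∀ (c : ℕ → ℂ) (g : lp (fun _ : ℕ => ℂ) 2), HasSum (fun i => c i • u i) g →
      HasSum (fun i => ‖c i‖ ^ 2) (‖g‖ ^ 2) := by
    intro u hu c g h
    have ht : Filter.Tendsto (fun s : Finset ℕ => ∑ i ∈ s, c i • u i)
        Filter.atTop (nhds g) := h
    have h1 := (ht.norm).pow 2
    have h2 : ∀ s : Finset ℕ, ‖∑ i ∈ s, c i • u i‖ ^ 2 = ∑ i ∈ s, ‖c i‖ ^ 2 := by
      intro s
      simpa [LinearIsometry.toSpanSingleton_apply] using hu.orthogonalFamily.norm_sum c s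
    exact h1.congr h2
  -- nonnegativity / value of d
  have hdnn : ∀ k, 0 ≤ d k := fun k => (hd k) ▸ Real.sqrt_nonneg _
  have hd2 : ∀ k, 20 ≤ k → ‖((d k : ℝ) : ℂ)‖ ^ 2 = r k ^ 2 - r (k + 1) ^ 2 := by
    intro k hk
    have h1 : 0 ≤ r k ^ 2 - r (k + 1) ^ 2 := by
      have ha := hrmono k hk
      have hb := hrpos (k + 1) (by omega)
      nlinarith
    rw [Complex.norm_real, Real.norm_eq_abs, abs_of_nonneg (hdnn k), hd, Real.sq_sqrt h1]
  -- telescoping sums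
  have htele : ∀ k : ℕ, 20 ≤ k →
      HasSum (fun j : ℕ => r (j + k) ^ 2 - r (j + k + 1) ^ 2) (r k ^ 2) := by
    intro k hk
    have hnn : ∀ j : ℕ, 0 ≤ r (j + k) ^ 2 - r (j + k + 1) ^ 2 := by
      intro j
      have h1 := hrmono (j + k) (by omega)
      have h2 := hrpos (j + k + 1) (by omega)
      nlinarith
    rw [hasSum_iff_tendsto_nat_of_nonneg hnn]
    have hps : ∀ n : ℕ, ∑ j ∈ Finset.range n, (r (j + k) ^ 2 - r (j + k + 1) ^ 2)
        = r k ^ 2 - r (n + k) ^ 2 := by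
      intro n
      induction n with
      | zero => simp
      | succ n ih =>
        rw [Finset.sum_range_succ, ih]
        have he : n + 1 + k = n + k + 1 := by omega
        rw [he]
        ring
    have hlim : Filter.Tendsto (fun n : ℕ => r (n + k) ^ 2) Filter.atTop (nhds 0) := by
      have h1 : Filter.Tendsto (fun n : ℕ => r (n + k)) Filter.atTop (nhds 0) :=
        hr0.comp (Filter.tendsto_add_atTop_nat k)
      simpa using h1.pow 2
    have hconst : Filter.Tendsto (fun _ : ℕ => r k ^ 2) Filter.atTop (nhds (r k ^ 2)) :=
      tendsto_const_nhds
    have hsub := hconst.sub hlim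
    simp only [sub_zero] at hsub
    exact Filter.Tendsto.congr (fun n => (hps n).symm) hsub
  -- the orthonormal family for the series defining f
  have hu1 : Orthonormal ℂ (fun j : ℕ => (S ^ M (j + 20)) (w (j + 20))) := by
    have := hON 20 0 le_rfl (fun j => Nat.zero_le _)
    simpa using this
  -- summability of the series defining f
  have hsummable : Summable (fun j : ℕ => (d (j + 20) : ℂ) • (S ^ M (j + 20)) (w (j + 20))) := by
    have hV := hu1.orthogonalFamily
    have h2 : Summable (fun j : ℕ => ‖((d (j + 20) : ℝ) : ℂ)‖ ^ 2) :=
      ((htele 20 le_rfl).summable).congr (fun j => (hd2 (j + 20) (by omega)).symm)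
    have h3 := (hV.summable_iff_norm_sq_summable (fun j => ((d (j + 20) : ℝ) : ℂ))).2 h2
    exact h3.congr (fun j => by simp [LinearIsometry.toSpanSingleton_apply])
  obtain ⟨f, hf⟩ := hsummable
  refine ⟨f, hf, ?_⟩
  intro k hk
  obtain ⟨m, rfl⟩ : ∃ m, k = m + 20 := ⟨k - 20, by omega⟩
  -- B^{M k} kills the early blocks
  have hzero : ∀ j, j + 20 < m + 20 →
      (B ^ M (m + 20)) ((S ^ M (j + 20)) (w (j + 20))) = 0 := by
    intro j hj
    apply lp.ext
    funext n
    have ha : M (j + 20 + 1) ≤ M (m + 20) := hMle (j + 20) (m + 20) (by omega) hj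
    have hb : M (j + 20) < M (j + 20 + 1) := hMmono (j + 20) (by omega)
    rw [hBpow (M (m + 20)) ((S ^ M (j + 20)) (w (j + 20))) n,
      hSpow (M (j + 20)) (w (j + 20)) (n + M (m + 20)), if_neg (by omega)]
    have : ((0 : lp (fun _ : ℕ => ℂ) 2) : ℕ → ℂ) n = 0 := by
      rw [lp.coeFn_zero]; rfl
    rw [this]
    exact hwsupp (j + 20) (by omega) _ (by omega)
  -- applying B^{M k} to the series
  have hsum2 : HasSum (fun j : ℕ => (d (j + 20) : ℂ) •
      ((B ^ M (m + 20)) ((S ^ M (j + 20)) (w (j + 20))))) ((B ^ M (m + 20)) f) := by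
    simpa only [map_smul] using (B ^ M (m + 20)).hasSum hf
  have hz : ∑ i ∈ Finset.range m, (d (i + 20) : ℂ) •
      ((B ^ M (m + 20)) ((S ^ M (i + 20)) (w (i + 20)))) = 0 := by
    refine Finset.sum_eq_zero fun i hi => ?_
    have hi' : i < m := Finset.mem_range.mp hi
    rw [hzero i (by omega), smul_zero]
  have h4 : HasSum (fun j : ℕ => (d (j + 20) : ℂ) •
      ((B ^ M (m + 20)) ((S ^ M (j + 20)) (w (j + 20)))))
      ((B ^ M (m + 20)) f + ∑ i ∈ Finset.range m, (d (i + 20) : ℂ) •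
      ((B ^ M (m + 20)) ((S ^ M (i + 20)) (w (i + 20))))) := by
    rw [hz, add_zero]
    exact hsum2
  have hsum3 := (hasSum_nat_add_iff (f := fun j : ℕ => (d (j + 20) : ℂ) •
      ((B ^ M (m + 20)) ((S ^ M (j + 20)) (w (j + 20))))) m).2 h4
  -- rewrite shifted blocks
  have hBS : ∀ j : ℕ, (B ^ M (m + 20)) ((S ^ M (j + m + 20)) (w (j + m + 20)))
      = (S ^ (M (j + m + 20) - M (m + 20))) (w (j + m + 20)) := by
    intro j
    have hab : M (m + 20) ≤ M (j + m + 20) := hMle' (m + 20) (j + m + 20) (by omega) (by omega)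
    apply lp.ext
    funext n
    rw [hBpow (M (m + 20)) ((S ^ M (j + m + 20)) (w (j + m + 20))) n,
      hSpow (M (j + m + 20)) (w (j + m + 20)) (n + M (m + 20)),
      hSpow (M (j + m + 20) - M (m + 20)) (w (j + m + 20)) n]
    by_cases h1 : n < M (j + m + 20) - M (m + 20)
    · rw [if_pos h1, if_pos (by omega)]
    · rw [if_neg h1, if_neg (by omega)]
      have he : n + M (m + 20) - M (j + m + 20) = n - (M (j + m + 20) - M (m + 20)) := by omega
      rw [he]
  have hsum4 : HasSum (fun j : ℕ => (d (j + m + 20) : ℂ) •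
      ((S ^ (M (j + m + 20) - M (m + 20))) (w (j + m + 20)))) ((B ^ M (m + 20)) f) := by
    have heq : (fun n : ℕ => (fun j : ℕ => (d (j + 20) : ℂ) •
        ((B ^ M (m + 20)) ((S ^ M (j + 20)) (w (j + 20))))) (n + m))
        = (fun j : ℕ => (d (j + m + 20) : ℂ) •
        ((S ^ (M (j + m + 20) - M (m + 20))) (w (j + m + 20)))) := by
      funext n
      show (d (n + m + 20) : ℂ) • ((B ^ M (m + 20)) ((S ^ M (n + m + 20)) (w (n + m + 20))))
          = (d (n + m + 20) : ℂ) • ((S ^ (M (n + m + 20) - M (m + 20))) (w (n + m + 20)))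
      rw [hBS n]
    rw [heq] at hsum3
    exact hsum3
  have hsum5 : HasSum (fun j : ℕ => (d (j + (m + 20)) : ℂ) •
      ((S ^ (M (j + (m + 20)) - M (m + 20))) (w (j + (m + 20))))) ((B ^ M (m + 20)) f) := by
    simpa only [Nat.add_assoc] using hsum4
  have huk : Orthonormal ℂ (fun j : ℕ =>
      (S ^ (M (j + (m + 20)) - M (m + 20))) (w (j + (m + 20)))) :=
    hON (m + 20) (M (m + 20)) (by omega)
      (fun j => hMle' (m + 20) (j + (m + 20)) (by omega) (by omega))
  have hns : HasSum (fun j : ℕ => ‖((d (j + (m + 20)) : ℝ) : ℂ)‖ ^ 2)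
      (‖(B ^ M (m + 20)) f‖ ^ 2) := hkey _ huk _ _ hsum5
  have hfe : (fun j : ℕ => ‖((d (j + (m + 20)) : ℝ) : ℂ)‖ ^ 2)
      = (fun j : ℕ => r (j + (m + 20)) ^ 2 - r (j + (m + 20) + 1) ^ 2) :=
    funext fun j => hd2 (j + (m + 20)) (by omega)
  rw [hfe] at hns
  have hval : ‖(B ^ M (m + 20)) f‖ ^ 2 = r (m + 20) ^ 2 :=
    hns.unique (htele (m + 20) (by omega))
  have h1 : 0 ≤ ‖(B ^ M (m + 20)) f‖ := norm_nonneg _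
  have h2 : 0 < r (m + 20) := hrpos _ (by omega)
  calc ‖(B ^ M (m + 20)) f‖ = Real.sqrt (‖(B ^ M (m + 20)) f‖ ^ 2) := (Real.sqrt_sq h1).symm
    _ = Real.sqrt (r (m + 20) ^ 2) := by rw [hval]
    _ = r (m + 20) := Real.sqrt_sq h2.le
end

section
/- With f = ∑_{k≥20} d_k S^{M_k} w_k as above (w_k unit vectors supported on the first M_{k+1}−M_k coordinates, d_k = √(r_k² − r_{k+1}²)), if additionally r_{k+1}/d_k → 0 as k → ∞, then ‖(1/d_k) B^{M_k} f − w_k‖ → 0 as k → ∞. -/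
noncomputable abbrev E2 : Type := lp (fun _ : ℕ => ℂ) 2

lemma coordB (B : E2 →L[ℂ] E2) (hB : ∀ (g : E2) (n : ℕ), (B g : ℕ → ℂ) n = g (n + 1))
    (a : ℕ) (g : E2) (n : ℕ) : ((B ^ a) g : ℕ → ℂ) n = g (n + a) := by
  induction a generalizing g n with
  | zero => simp [ContinuousLinearMap.one_apply]
  | succ a ih =>
    rw [pow_succ, ContinuousLinearMap.mul_apply, ih, hB]
    congr 1

lemma coordS (S : E2 →L[ℂ] E2)
    (hS : ∀ g : E2, (S g : ℕ → ℂ) 0 = 0 ∧ ∀ n : ℕ, (S g : ℕ → ℂ) (n + 1) = g n)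
    (a : ℕ) (g : E2) (n : ℕ) :
    ((S ^ a) g : ℕ → ℂ) n = if n < a then 0 else g (n - a) := by
  induction a generalizing g n with
  | zero => simp
  | succ a ih =>
    rw [pow_succ', ContinuousLinearMap.mul_apply]
    cases n with
    | zero => simp [(hS _).1]
    | succ n =>
      rw [(hS _).2, ih]
      by_cases h : n < a
      · simp [h, Nat.succ_lt_succ h]
      · have h2 : ¬ n + 1 < a + 1 := by omega
        have h3 : n + 1 - (a + 1) = n - a := by omega
        simp only [h, h2, if_false, h3]

lemma BSle (B S : E2 →L[ℂ] E2)
    (hB : ∀ (g : E2) (n : ℕ), (B g : ℕ → ℂ) n = g (n + 1))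
    (hS : ∀ g : E2, (S g : ℕ → ℂ) 0 = 0 ∧ ∀ n : ℕ, (S g : ℕ → ℂ) (n + 1) = g n)
    (a b : ℕ) (hab : a ≤ b) (g : E2) : (B ^ a) ((S ^ b) g) = (S ^ (b - a)) g := by
  obtain ⟨c, rfl⟩ := Nat.le.dest hab
  apply lp.ext; funext n
  rw [coordB B hB, coordS S hS, coordS S hS]
  have h1 : a + c - a = c := by omega
  have h2 : (n + a < a + c) ↔ n < c := by omega
  by_cases h : n < c
  · simp [h, h1, h2.2 h]
  · have h3 : ¬ n + a < a + c := by omega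
    have h4 : n + a - (a + c) = n - (a + c - a) := by omega
    simp only [h1, h, h3, if_false, h4]

open scoped ComplexInnerProductSpace ENNReal

lemma rpow2_eq {x y : ℝ} (hx : 0 ≤ x) (hy : 0 ≤ y)
    (h : x ^ (2 : ℝ≥0∞).toReal = y ^ (2 : ℝ≥0∞).toReal) : x = y := by
  have ht : ((2 : ℝ≥0∞).toReal) = ((2 : ℕ) : ℝ) := by norm_num
  rw [ht, Real.rpow_natCast, Real.rpow_natCast] at h
  calc x = Real.sqrt (x ^ 2) := (Real.sqrt_sq hx).symm
    _ = Real.sqrt (y ^ 2) := by rw [h]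
    _ = y := Real.sqrt_sq hy

lemma rpow2_le {x y : ℝ} (hx : 0 ≤ x) (hy : 0 ≤ y)
    (h : x ^ (2 : ℝ≥0∞).toReal ≤ y ^ (2 : ℝ≥0∞).toReal) : x ≤ y := by
  have ht : ((2 : ℝ≥0∞).toReal) = ((2 : ℕ) : ℝ) := by norm_num
  rw [ht, Real.rpow_natCast, Real.rpow_natCast] at h
  calc x = Real.sqrt (x ^ 2) := (Real.sqrt_sq hx).symm
    _ ≤ Real.sqrt (y ^ 2) := Real.sqrt_le_sqrt h
    _ = y := Real.sqrt_sq hy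

lemma hp2 : (0 : ℝ) < (2 : ℝ≥0∞).toReal := by norm_num

lemma sq_summable (x : E2) :
    Summable (fun n => ‖(x : ℕ → ℂ) n‖ ^ (2 : ℝ≥0∞).toReal) :=
  (memℓp_gen_iff hp2).1 (lp.memℓp x)

lemma normS_eq (S : E2 →L[ℂ] E2)
    (hS : ∀ g : E2, (S g : ℕ → ℂ) 0 = 0 ∧ ∀ n : ℕ, (S g : ℕ → ℂ) (n + 1) = g n)
    (g : E2) : ‖S g‖ = ‖g‖ := by
  refine rpow2_eq (norm_nonneg _) (norm_nonneg _) ?_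
  rw [lp.norm_rpow_eq_tsum hp2, lp.norm_rpow_eq_tsum hp2,
    Summable.tsum_eq_zero_add (sq_summable (S g))]
  simp [(hS g).1, (hS g).2, Real.zero_rpow (ne_of_gt hp2)]

lemma normSpow_eq (S : E2 →L[ℂ] E2)
    (hS : ∀ g : E2, (S g : ℕ → ℂ) 0 = 0 ∧ ∀ n : ℕ, (S g : ℕ → ℂ) (n + 1) = g n)
    (a : ℕ) (g : E2) : ‖(S ^ a) g‖ = ‖g‖ := by
  induction a generalizing g with
  | zero => simp [ContinuousLinearMap.one_apply]
  | succ a ih => rw [pow_succ', ContinuousLinearMap.mul_apply, normS_eq S hS, ih]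

lemma normB_le (B : E2 →L[ℂ] E2)
    (hB : ∀ (g : E2) (n : ℕ), (B g : ℕ → ℂ) n = g (n + 1))
    (g : E2) : ‖B g‖ ≤ ‖g‖ := by
  refine rpow2_le (norm_nonneg _) (norm_nonneg _) ?_
  rw [lp.norm_rpow_eq_tsum hp2, lp.norm_rpow_eq_tsum hp2]
  refine Summable.tsum_le_tsum_of_inj (fun n => n + 1) (add_left_injective 1)
    (fun c _ => Real.rpow_nonneg (norm_nonneg _) _)
    (fun n => by rw [hB]) (sq_summable (B g)) (sq_summable g)

lemma normBpow_le (B : E2 →L[ℂ] E2)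
    (hB : ∀ (g : E2) (n : ℕ), (B g : ℕ → ℂ) n = g (n + 1))
    (a : ℕ) (g : E2) : ‖(B ^ a) g‖ ≤ ‖g‖ := by
  induction a generalizing g with
  | zero => simp [ContinuousLinearMap.one_apply]
  | succ a ih =>
    rw [pow_succ', ContinuousLinearMap.mul_apply]
    exact (normB_le B hB _).trans (ih g)

lemma pythag {T : ℕ → E2} {t : E2} (ht : HasSum T t)
    (horth : ∀ i j, i ≠ j → ⟪T i, T j⟫ = 0) {c : ℝ}
    (hc : HasSum (fun i => ‖T i‖ ^ 2) c) : ‖t‖ ^ 2 = c := by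
  have h1 : ∀ j, ⟪T j, t⟫ = ((‖T j‖ : ℂ)) ^ 2 := by
    intro j
    have hs : HasSum (fun i => ⟪T j, T i⟫) ⟪T j, t⟫ := (innerSL ℂ (T j)).hasSum ht
    have hs2 : HasSum (fun i => ⟪T j, T i⟫) (⟪T j, T j⟫) := by
      have e : (fun i => ⟪T j, T i⟫) = fun i => if i = j then ⟪T j, T j⟫ else 0 :=
        funext fun i => by
          by_cases h : i = j
          · subst h; simp
          · simp [h, horth j i (Ne.symm h)]
      rw [e]
      exact hasSum_ite_eq j _
    rw [hs.unique hs2]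
    exact inner_self_eq_norm_sq_to_K (T j)
  have h2 : HasSum (fun j => ⟪t, T j⟫) ⟪t, t⟫ := (innerSL ℂ t).hasSum ht
  have h2' : HasSum (fun j => ((‖T j‖ : ℂ)) ^ 2) ⟪t, t⟫ := by
    have e : (fun j => ⟪t, T j⟫) = fun j => ((‖T j‖ : ℂ)) ^ 2 := funext fun j => by
      rw [← inner_conj_symm, h1 j, ← Complex.ofReal_pow, Complex.conj_ofReal]
    exact e ▸ h2
  have h4 : HasSum (fun j => ((‖T j‖ ^ 2 : ℝ) : ℂ)) ((c : ℝ) : ℂ) := hc.mapL Complex.ofRealCLM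
  have h5 : ⟪t, t⟫ = ((c : ℝ) : ℂ) := h2'.unique (by push_cast at h4 ⊢; exact h4)
  have h6 : ((‖t‖ : ℂ)) ^ 2 = ((c : ℝ) : ℂ) :=
    (inner_self_eq_norm_sq_to_K t).symm.trans h5
  exact_mod_cast h6
set_option maxHeartbeats 1000000 in
theorem stmt_8
    (B S : lp (fun _ : ℕ => ℂ) 2 →L[ℂ] lp (fun _ : ℕ => ℂ) 2)
    (hB : ∀ (g : lp (fun _ : ℕ => ℂ) 2) (n : ℕ), (B g : ℕ → ℂ) n = g (n + 1))
    (hS : ∀ g : lp (fun _ : ℕ => ℂ) 2,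
      (S g : ℕ → ℂ) 0 = 0 ∧ ∀ n : ℕ, (S g : ℕ → ℂ) (n + 1) = g n)
    (M : ℕ → ℕ) (hMpos : ∀ k, 20 ≤ k → 0 < M k)
    (hMmono : ∀ k, 20 ≤ k → M k < M (k + 1))
    (r : ℕ → ℝ) (hrpos : ∀ k, 20 ≤ k → 0 < r k)
    (hrmono : ∀ k, 20 ≤ k → r (k + 1) < r k)
    (hr0 : Filter.Tendsto r Filter.atTop (nhds 0))
    (w : ℕ → lp (fun _ : ℕ => ℂ) 2) (hwnorm : ∀ k, 20 ≤ k → ‖w k‖ = 1)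
    (hwsupp : ∀ k, 20 ≤ k → ∀ i : ℕ, M (k + 1) - M k ≤ i → (w k : ℕ → ℂ) i = 0)
    (d : ℕ → ℝ) (hd : ∀ k, d k = Real.sqrt (r k ^ 2 - r (k + 1) ^ 2))
    (hratio : Filter.Tendsto (fun k => r (k + 1) / d k) Filter.atTop (nhds 0))
    (f : lp (fun _ : ℕ => ℂ) 2)
    (hf : HasSum (fun k : ℕ => (d (k + 20) : ℂ) • ((S ^ M (k + 20)) (w (k + 20)))) f) :
    Filter.Tendsto (fun k => ‖(1 / d k : ℂ) • ((B ^ M k) f) - w k‖)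
      Filter.atTop (nhds 0) := by
  set T : ℕ → E2 := fun j => (d (j + 20) : ℂ) • ((S ^ M (j + 20)) (w (j + 20))) with hT
  have hf' : HasSum T f := hf
  -- monotonicity of M
  have hMle : ∀ a b, 20 ≤ a → a ≤ b → M a ≤ M b := by
    intro a b ha hab
    induction b, hab using Nat.le_induction with
    | base => exact le_rfl
    | succ n hn ih => exact ih.trans (le_of_lt (hMmono n (ha.trans hn)))
  have hd_pos : ∀ k, 20 ≤ k → 0 < d k := by
    intro k hk
    rw [hd]
    apply Real.sqrt_pos.2
    have h1 := hrpos (k + 1) (by omega)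
    have h2 := hrmono k hk
    nlinarith
  have hd_nonneg : ∀ k, 0 ≤ d k := fun k => by rw [hd]; exact Real.sqrt_nonneg _
  -- norm of the pieces
  have hTnorm : ∀ j, ‖T j‖ ^ 2 = r (j + 20) ^ 2 - r (j + 21) ^ 2 := by
    intro j
    have h20 : (20 : ℕ) ≤ j + 20 := by omega
    have h1 := hrpos (j + 21) (by omega)
    have h2 := hrmono (j + 20) h20
    have hsq : (0 : ℝ) ≤ r (j + 20) ^ 2 - r (j + 21) ^ 2 := by nlinarith
    rw [hT]
    simp only [norm_smul, normSpow_eq S hS, hwnorm _ h20, mul_one, Complex.norm_real, Real.norm_eq_abs]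
    rw [abs_of_nonneg (hd_nonneg _), hd, Real.sq_sqrt hsq]
  -- orthogonality
  have horth0 : ∀ i j, i < j → ⟪T i, T j⟫ = 0 := by
    intro i j hij
    rw [hT]
    simp only [inner_smul_left, inner_smul_right]
    have hkey : ⟪(S ^ M (i + 20)) (w (i + 20)), (S ^ M (j + 20)) (w (j + 20))⟫ = (0 : ℂ) := by
      rw [lp.inner_eq_tsum]
      convert tsum_zero with n
      rw [coordS S hS, coordS S hS]
      by_cases hn : n < M (j + 20)
      · rw [if_pos hn, inner_zero_right]
      · push_neg at hn
        have h1 : M (i + 21) ≤ M (j + 20) := hMle _ _ (by omega) (by omega)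
        have h0 : M (i + 20) < M (i + 21) := hMmono (i + 20) (by omega)
        have h2 : ¬ n < M (i + 20) := by omega
        rw [if_neg h2]
        have h3 : M (i + 20 + 1) - M (i + 20) ≤ n - M (i + 20) := by
          have : M (i + 20 + 1) = M (i + 21) := by congr 1
          omega
        rw [hwsupp (i + 20) (by omega) _ h3, inner_zero_left]
    rw [hkey, mul_zero, mul_zero]
  have horth : ∀ i j, i ≠ j → ⟪T i, T j⟫ = 0 := by
    intro i j hij
    rcases lt_or_gt_of_ne hij with h | h
    · exact horth0 i j h
    · rw [← inner_conj_symm, horth0 j i h, map_zero]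
  -- telescoping sums
  have htel : ∀ N, 20 ≤ N → HasSum (fun j => r (j + N) ^ 2 - r (j + 1 + N) ^ 2) (r N ^ 2) := by
    intro N hN
    rw [hasSum_iff_tendsto_nat_of_nonneg]
    · have hps : ∀ n, ∑ i ∈ Finset.range n, (r (i + N) ^ 2 - r (i + 1 + N) ^ 2)
          = r N ^ 2 - r (n + N) ^ 2 := by
        intro n
        have := Finset.sum_range_sub' (fun j => r (j + N) ^ 2) n
        simpa using this
      simp only [hps]
      have h2 : Filter.Tendsto (fun n => r (n + N) ^ 2) Filter.atTop (nhds 0) := by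
        have h3 := (hr0.comp (Filter.tendsto_add_atTop_nat N)).pow 2
        simpa using h3
      simpa using tendsto_const_nhds.sub h2
    · intro i
      have h1 := hrmono (i + N) (by omega)
      have h2 := hrpos (i + 1 + N) (by omega)
      have h3 : i + N + 1 = i + 1 + N := by omega
      rw [h3] at h1
      nlinarith
  -- squeeze
  refine tendsto_of_tendsto_of_tendsto_of_le_of_le' tendsto_const_nhds hratio
    (Filter.Eventually.of_forall fun k => norm_nonneg _) ?_
  filter_upwards [Filter.eventually_ge_atTop 20] with k hk
  obtain ⟨m, rfl⟩ : ∃ m, k = m + 20 := ⟨k - 20, by omega⟩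
  set t : E2 := f - ∑ i ∈ Finset.range (m + 1), T i with htdef
  have ht : HasSum (fun j => T (j + (m + 1))) t := by
    refine (hasSum_nat_add_iff (m + 1)).2 ?_
    rw [htdef, sub_add_cancel]
    exact hf'
  -- norm of the tail
  have hnt : ‖t‖ ^ 2 = r (m + 21) ^ 2 := by
    refine pythag ht (fun i j hij => horth _ _ (by omega)) ?_
    have e : (fun j => ‖T (j + (m + 1))‖ ^ 2)
        = fun j => r (j + (m + 21)) ^ 2 - r (j + 1 + (m + 21)) ^ 2 := by
      funext j
      rw [hTnorm]
      have e1 : j + (m + 1) + 20 = j + (m + 21) := by omega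
      have e2 : j + (m + 1) + 21 = j + 1 + (m + 21) := by omega
      rw [e1, e2]
    exact e ▸ htel (m + 21) (by omega)
  have hnt' : ‖t‖ = r (m + 21) := by
    have h1 : 0 ≤ r (m + 21) := (hrpos (m + 21) (by omega)).le
    calc ‖t‖ = Real.sqrt (‖t‖ ^ 2) := (Real.sqrt_sq (norm_nonneg _)).symm
      _ = Real.sqrt (r (m + 21) ^ 2) := by rw [hnt]
      _ = r (m + 21) := Real.sqrt_sq h1
  -- decomposition of B^{M k} f
  have hBf : (B ^ M (m + 20)) f = (d (m + 20) : ℂ) • w (m + 20) + (B ^ M (m + 20)) t := by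
    have hft : f = (∑ i ∈ Finset.range (m + 1), T i) + t := by
      rw [htdef, add_sub_cancel]
    rw [hft, map_add]
    congr 1
    rw [map_sum, Finset.sum_range_succ]
    have hzero : ∀ i ∈ Finset.range m, (B ^ M (m + 20)) (T i) = 0 := by
      intro i hi
      have him : i < m := Finset.mem_range.1 hi
      rw [hT, map_smul]
      have : (B ^ M (m + 20)) ((S ^ M (i + 20)) (w (i + 20))) = 0 := by
        apply lp.ext; funext n
        rw [coordB B hB, coordS S hS]
        have h1 : M (i + 21) ≤ M (m + 20) := hMle _ _ (by omega) (by omega)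
        have h0 : M (i + 20) < M (i + 21) := hMmono (i + 20) (by omega)
        have h2 : ¬ n + M (m + 20) < M (i + 20) := by omega
        rw [if_neg h2]
        have h3 : M (i + 20 + 1) - M (i + 20) ≤ n + M (m + 20) - M (i + 20) := by
          have : M (i + 20 + 1) = M (i + 21) := by congr 1
          omega
        rw [hwsupp (i + 20) (by omega) _ h3]
        simp
      rw [this, smul_zero]
    rw [Finset.sum_eq_zero hzero, zero_add, hT]
    rw [map_smul, BSle B S hB hS _ _ (le_refl _), Nat.sub_self, pow_zero,
      ContinuousLinearMap.one_apply]
  -- the estimate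
  have hdpos := hd_pos (m + 20) (by omega)
  have hdC : ((d (m + 20) : ℝ) : ℂ) ≠ 0 := Complex.ofReal_ne_zero.2 hdpos.ne'
  have hexpr : (1 / (d (m + 20) : ℂ)) • ((B ^ M (m + 20)) f) - w (m + 20)
      = (1 / (d (m + 20) : ℂ)) • ((B ^ M (m + 20)) t) := by
    rw [hBf, smul_add, smul_smul, one_div, inv_mul_cancel₀ hdC, one_smul, add_comm,
      add_sub_cancel_right]
  calc ‖(1 / (d (m + 20) : ℂ)) • ((B ^ M (m + 20)) f) - w (m + 20)‖
      = ‖(1 / (d (m + 20) : ℂ))‖ * ‖(B ^ M (m + 20)) t‖ := by rw [hexpr, norm_smul]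
    _ = (1 / d (m + 20)) * ‖(B ^ M (m + 20)) t‖ := by
        rw [norm_div, norm_one, Complex.norm_real, Real.norm_eq_abs, abs_of_pos hdpos]
    _ ≤ (1 / d (m + 20)) * r (m + 21) := by
        refine mul_le_mul_of_nonneg_left ?_ (by positivity)
        rw [← hnt']
        exact normBpow_le B hB _ t
    _ = r (m + 20 + 1) / d (m + 20) := by
        rw [one_div, inv_mul_eq_div]
end

section
/- (Rolewicz) For every complex number z with |z| > 1, the operator zB on ℓ² is hypercyclic, i.e., there exists f ∈ ℓ² whose orbit under zB is dense. -/
set_option maxHeartbeats 2000000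
set_option synthInstance.maxHeartbeats 400000

open Metric TopologicalSpace Filter
open scoped ENNReal

namespace Rolewicz

noncomputable section

abbrev X := lp (fun _ : ℕ => ℂ) 2

lemma two_toReal_pos : (0 : ℝ) < ((2 : ℝ≥0∞)).toReal := by norm_num

/-- The forward-shifted sequence. -/
def shiftFun (n : ℕ) (y : X) : ℕ → ℂ := fun i => if n ≤ i then (y : ℕ → ℂ) (i - n) else 0

lemma shiftFun_zero (n : ℕ) (y : X) {x : ℕ} (hx : x ∉ Set.range (fun j : ℕ => j + n)) :
    shiftFun n y x = 0 := by
  have : ¬ n ≤ x := fun hle => hx ⟨x - n, by simp; omega⟩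
  simp [shiftFun, this]

lemma shiftFun_add (n : ℕ) (y : X) (j : ℕ) : shiftFun n y (j + n) = (y : ℕ → ℂ) j := by
  simp [shiftFun, Nat.le_add_left]

lemma add_injective (n : ℕ) : Function.Injective (fun j : ℕ => j + n) := fun a b h => by
  simpa using h

lemma shiftFun_memℓp (n : ℕ) (y : X) : Memℓp (shiftFun n y) 2 := by
  apply memℓp_gen
  have h : Summable fun j => ‖(y : ℕ → ℂ) j‖ ^ ((2 : ℝ≥0∞)).toReal :=
    (lp.memℓp y).summable two_toReal_pos
  have h0 : ∀ x ∉ Set.range (fun j : ℕ => j + n),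
      ‖shiftFun n y x‖ ^ ((2 : ℝ≥0∞)).toReal = 0 := by
    intro x hx
    rw [shiftFun_zero n y hx]
    simp [Real.zero_rpow]
  refine ((add_injective n).summable_iff h0).mp ?_
  convert h using 1
  funext j
  simp [Function.comp, shiftFun_add]

def shift (n : ℕ) (y : X) : X := ⟨shiftFun n y, shiftFun_memℓp n y⟩

lemma shift_coe (n : ℕ) (y : X) : ((shift n y : X) : ℕ → ℂ) = shiftFun n y := rfl

lemma shift_norm (n : ℕ) (y : X) : ‖shift n y‖ = ‖y‖ := by
  rw [lp.norm_eq_tsum_rpow two_toReal_pos, lp.norm_eq_tsum_rpow two_toReal_pos]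
  have hsupp : Function.support (fun i => ‖shiftFun n y i‖ ^ ((2 : ℝ≥0∞)).toReal)
      ⊆ Set.range (fun j : ℕ => j + n) := by
    intro x hx
    by_contra hxr
    apply hx
    have h0 := shiftFun_zero n y hxr
    simp only [h0, norm_zero]
    rw [Real.zero_rpow (by norm_num)]
  have hts : (∑' i, ‖((shift n y : X) : ℕ → ℂ) i‖ ^ ((2 : ℝ≥0∞)).toReal)
      = ∑' j, ‖(y : ℕ → ℂ) j‖ ^ ((2 : ℝ≥0∞)).toReal := by
    rw [shift_coe]
    rw [← (add_injective n).tsum_eq hsupp]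
    congr 1
    funext j
    simp [shiftFun_add]
  rw [hts]

/-- Truncation to the first `N` coordinates. -/
def trunc (N : ℕ) (u : X) : X := ∑ i ∈ Finset.range N, lp.single 2 i ((u : ℕ → ℂ) i)

lemma trunc_apply (N : ℕ) (u : X) (j : ℕ) :
    (trunc N u : ℕ → ℂ) j = if j < N then (u : ℕ → ℂ) j else 0 := by
  simp only [trunc, lp.coeFn_sum, Finset.sum_apply, lp.single_apply, Finset.sum_dite_eq,
    Finset.mem_range, Pi.single_apply, Finset.sum_ite_eq]

lemma exists_trunc_close (u : X) {ε : ℝ} (hε : 0 < ε) : ∃ N, ‖u - trunc N u‖ < ε := by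
  have h := lp.hasSum_single (E := fun _ : ℕ => ℂ) (p := 2) (by norm_num) u
  rw [HasSum] at h
  have h2 := Metric.tendsto_nhds.mp h ε hε
  rw [SummationFilter.unconditional_filter, Filter.eventually_atTop] at h2
  obtain ⟨s₀, hs₀⟩ := h2
  obtain ⟨N, hN⟩ := s₀.exists_nat_subset_range
  refine ⟨N, ?_⟩
  have h3 := hs₀ (Finset.range N) (Finset.le_iff_subset.mpr hN)
  rw [dist_eq_norm] at h3
  calc ‖u - trunc N u‖ = ‖trunc N u - u‖ := norm_sub_rev _ _
    _ < ε := h3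

lemma dense_span_singles :
    Dense ((Submodule.span ℂ (Set.range fun i : ℕ => lp.single 2 i (1 : ℂ)) : Submodule ℂ X)
      : Set X) := by
  rw [Metric.dense_iff]
  intro x r hr
  obtain ⟨N, hN⟩ := exists_trunc_close x hr
  refine ⟨trunc N x, ?_, ?_⟩
  · rw [mem_ball, dist_eq_norm, ← norm_neg, neg_sub]
    exact hN
  · apply Submodule.sum_mem
    intro i _
    have : lp.single 2 i ((x : ℕ → ℂ) i)
        = (((x : ℕ → ℂ) i • lp.single 2 i (1 : ℂ)) : X) := by
      rw [← lp.single_smul]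
      congr 1
      simp
    rw [this]
    exact Submodule.smul_mem _ _ (Submodule.subset_span ⟨i, rfl⟩)

instance : SeparableSpace X := by
  rw [← isSeparable_univ_iff]
  have hc : (Set.range fun i : ℕ => lp.single 2 i (1 : ℂ)).Countable := Set.countable_range _
  have h1 : IsSeparable ((Submodule.span ℂ (Set.range fun i : ℕ => lp.single 2 i (1 : ℂ))
      : Submodule ℂ X) : Set X) := hc.isSeparable.span
  have h2 := h1.closure
  rwa [dense_span_singles.closure_eq] at h2

end

end Rolewicz

open Rolewicz Metric TopologicalSpace Filter in
theorem stmt_14 (B : lp (fun _ : ℕ => ℂ) 2 →L[ℂ] lp (fun _ : ℕ => ℂ) 2)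
    (hB : ∀ (g : lp (fun _ : ℕ => ℂ) 2) (n : ℕ), (B g : ℕ → ℂ) n = g (n + 1)) :
    ∀ z : ℂ, 1 < ‖z‖ →
      ∃ f : lp (fun _ : ℕ => ℂ) 2,
        Dense (Set.range fun n : ℕ => ((z • B) ^ n) f) := by
  intro z hz
  have hz1 : (1 : ℝ) < ‖z‖ := hz
  have hz0 : z ≠ 0 := by
    intro h; rw [h] at hz1; simp at hz1; linarith
  set T : X →L[ℂ] X := z • B with hT
  -- coordinates of powers of B
  have hBpow : ∀ (n : ℕ) (g : X) (i : ℕ), ((B ^ n) g : ℕ → ℂ) i = (g : ℕ → ℂ) (i + n) := by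
    intro n
    induction n with
    | zero => intro g i; simp
    | succ n ih =>
      intro g i
      rw [pow_succ, ContinuousLinearMap.mul_apply, ih (B g) i, hB g (i + n), add_assoc]
  have hTpow : ∀ (n : ℕ) (g : X) (i : ℕ),
      ((T ^ n) g : ℕ → ℂ) i = z ^ n * (g : ℕ → ℂ) (i + n) := by
    intro n g i
    rw [hT, smul_pow]
    rw [ContinuousLinearMap.smul_apply, lp.coeFn_smul, Pi.smul_apply, smul_eq_mul, hBpow]
  -- key transitivity step
  have key : ∀ (u y : X) (ε : ℝ), 0 < ε → ∃ (x : X) (n : ℕ), ‖x - u‖ < ε ∧ (T ^ n) x = y := by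
    intro u y ε hε
    obtain ⟨N, hN⟩ := exists_trunc_close u (half_pos hε)
    -- choose n ≥ N with ‖y‖ / |z|^n < ε/2
    have htend : Tendsto (fun n : ℕ => (‖z‖) ^ n) atTop atTop :=
      tendsto_pow_atTop_atTop_of_one_lt hz1
    obtain ⟨n₀, hn₀⟩ := (htend.eventually_gt_atTop (‖y‖ / (ε / 2))).exists
    set n := max N n₀ with hn
    have hzn : ‖y‖ / (ε / 2) < (‖z‖) ^ n := by
      calc ‖y‖ / (ε / 2) < (‖z‖) ^ n₀ := hn₀
        _ ≤ (‖z‖) ^ n := pow_le_pow_right₀ (le_of_lt hz1) (le_max_right _ _)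
    have hzpos : (0 : ℝ) < (‖z‖) ^ n := pow_pos (by linarith) n
    have hsmall : ‖y‖ / (‖z‖) ^ n < ε / 2 := by
      rw [div_lt_iff₀ hzpos]
      calc ‖y‖ = ‖y‖ / (ε / 2) * (ε / 2) := by field_simp
        _ < (‖z‖) ^ n * (ε / 2) := mul_lt_mul_of_pos_right hzn (half_pos hε)
        _ = ε / 2 * (‖z‖) ^ n := mul_comm _ _
    refine ⟨trunc N u + (z ^ n)⁻¹ • shift n y, n, ?_, ?_⟩
    · rw [add_sub_right_comm]
      calc ‖(trunc N u - u) + (z ^ n)⁻¹ • shift n y‖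
          ≤ ‖trunc N u - u‖ + ‖(z ^ n)⁻¹ • shift n y‖ := norm_add_le _ _
        _ < ε / 2 + ε / 2 := by
            apply add_lt_add
            · rw [norm_sub_rev]; exact hN
            · rw [norm_smul, shift_norm]
              have : ‖(z ^ n)⁻¹‖ = ((‖z‖) ^ n)⁻¹ := by
                rw [norm_inv, norm_pow]
              rw [this]
              calc ((‖z‖) ^ n)⁻¹ * ‖y‖ = ‖y‖ / (‖z‖) ^ n := by
                    rw [div_eq_inv_mul]
                _ < ε / 2 := hsmall
        _ = ε := add_halves ε
    · ext i
      rw [hTpow]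
      rw [lp.coeFn_add, Pi.add_apply, lp.coeFn_smul, Pi.smul_apply, trunc_apply,
        shift_coe]
      have h1 : ¬ (i + n < N) := by
        have : N ≤ n := le_max_left _ _
        omega
      rw [if_neg h1]
      rw [shiftFun_add n y i]
      have hzn0 : z ^ n ≠ 0 := pow_ne_zero n hz0
      simp only [zero_add, smul_eq_mul]
      field_simp
  -- Baire category argument
  haveI : Nonempty X := ⟨0⟩
  set d : ℕ → X := TopologicalSpace.denseSeq X with hd
  have hdd : DenseRange d := TopologicalSpace.denseRange_denseSeq X
  set G : Set X := ⋂ p : ℕ × ℕ, ⋃ n : ℕ,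
    (fun f : X => (T ^ n) f) ⁻¹' Metric.ball (d p.1) ((1 : ℝ) / (p.2 + 1)) with hG
  have hGopen : ∀ p : ℕ × ℕ, IsOpen (⋃ n : ℕ,
      (fun f : X => (T ^ n) f) ⁻¹' Metric.ball (d p.1) ((1 : ℝ) / (p.2 + 1))) := by
    intro p
    apply isOpen_iUnion
    intro n
    exact (Metric.isOpen_ball).preimage (T ^ n).continuous
  have hGdense : ∀ p : ℕ × ℕ, Dense (⋃ n : ℕ,
      (fun f : X => (T ^ n) f) ⁻¹' Metric.ball (d p.1) ((1 : ℝ) / (p.2 + 1))) := by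
    intro p
    rw [Metric.dense_iff]
    intro u r hr
    obtain ⟨x, n, hx, hTx⟩ := key u (d p.1) r hr
    refine ⟨x, ?_, Set.mem_iUnion.mpr ⟨n, ?_⟩⟩
    · rw [Metric.mem_ball, dist_eq_norm]
      exact hx
    · simp only [Set.mem_preimage, Metric.mem_ball, hTx, dist_self]
      positivity
  have hGd : Dense G := dense_iInter_of_isOpen hGopen hGdense
  obtain ⟨f, hf⟩ := hGd.nonempty
  refine ⟨f, ?_⟩
  rw [Metric.dense_iff]
  intro x r hr
  obtain ⟨k, hk⟩ : ∃ k, dist x (d k) < r / 2 := by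
    have := Metric.denseRange_iff.mp hdd x (r / 2) (half_pos hr)
    exact this
  obtain ⟨m, hm⟩ := exists_nat_one_div_lt (K := ℝ) (half_pos hr)
  have hfG := Set.mem_iInter.mp hf (k, m)
  obtain ⟨n, hn⟩ := Set.mem_iUnion.mp hfG
  refine ⟨(T ^ n) f, ?_, ⟨n, rfl⟩⟩
  rw [Metric.mem_ball]
  have h1 : dist ((T ^ n) f) (d k) < (1 : ℝ) / (m + 1) := hn
  calc dist ((T ^ n) f) x ≤ dist ((T ^ n) f) (d k) + dist (d k) x := dist_triangle _ _ _
    _ < (1 : ℝ) / (m + 1) + r / 2 := by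
        apply add_lt_add h1
        rw [dist_comm]; exact hk
    _ < r / 2 + r / 2 := by
        apply add_lt_add_left
        exact_mod_cast hm
    _ = r := add_halves r
end

section
/- There exist sequences (M_k)_{k≥20} of positive integers and (x_k)_{k≥20} of positive reals such that: (i) (M_k) is strictly increasing and M_{k+1} − M_k → ∞; (ii) (M_k x_k) is strictly increasing and M_{k+1} x_{k+1} − M_k x_k → ∞; (iii) for every s > 0, δ > 0 and K > 0, there exists k > K with |s − x_k| < δ/M_k. -/
open Filter

structure St where
  n : ℕ
  M : ℕ
  x : ℝ

noncomputable def step (s : St) : St :=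
  if s.x < (s.n : ℝ) then
    ⟨s.n, s.M + s.n ^ 2, s.x + 1 / ((s.n : ℝ) * ((s.M + s.n ^ 2 : ℕ) : ℝ))⟩
  else
    ⟨s.n + 1, (s.n + 1) * (⌈(s.M : ℝ) * s.x⌉₊ + s.n + 1), 1 / ((s.n : ℝ) + 1)⟩

noncomputable def st : ℕ → St
  | 0 => ⟨1, 1, 1⟩
  | k + 1 => step (st k)

def SInv (s : St) : Prop := 1 ≤ s.n ∧ 1 ≤ s.M ∧ 1 / (s.n : ℝ) ≤ s.x

lemma inv_step {s : St} (h : SInv s) : SInv (step s) := by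
  obtain ⟨h1, h2, h3⟩ := h
  have hn : (0:ℝ) < s.n := by exact_mod_cast h1
  by_cases hb : s.x < (s.n : ℝ) <;> simp only [step, hb, if_true, if_false, SInv] <;>
    refine ⟨by omega, ?_, ?_⟩
  · omega
  · have : (0:ℝ) ≤ 1 / ((s.n : ℝ) * ((s.M + s.n ^ 2 : ℕ) : ℝ)) := by positivity
    linarith
  · have : 1 ≤ ⌈(s.M : ℝ) * s.x⌉₊ + s.n + 1 := by omega
    exact Nat.one_le_iff_ne_zero.mpr (by positivity)
  · push_cast; norm_num

lemma inv_st (k : ℕ) : SInv (st k) := by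
  induction k with
  | zero => exact ⟨le_refl 1, le_refl 1, by norm_num [st]⟩
  | succ k ih => exact inv_step ih

lemma ceilM {s : St} (h1 : 1 ≤ s.n) (h2 : 1 ≤ s.M) (hx : (s.n : ℝ) ≤ s.x) :
    s.M ≤ ⌈(s.M : ℝ) * s.x⌉₊ := by
  have hMx : (s.M : ℝ) ≤ (s.M : ℝ) * s.x := by
    nlinarith [(by exact_mod_cast h2 : (1:ℝ) ≤ (s.M:ℝ)), (by exact_mod_cast h1 : (1:ℝ) ≤ (s.n:ℝ))]
  calc s.M = ⌈(s.M : ℝ)⌉₊ := (Nat.ceil_natCast _).symm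
    _ ≤ _ := Nat.ceil_le_ceil hMx

lemma step_M {s : St} (h : SInv s) : s.M + s.n ^ 2 ≤ (step s).M := by
  obtain ⟨h1, h2, h3⟩ := h
  by_cases hb : s.x < (s.n : ℝ)
  · simp only [step, hb, if_true]
    exact le_refl _
  · simp only [step, hb, if_false]
    have hceil := ceilM h1 h2 (not_lt.1 hb)
    nlinarith [hceil, h1]

lemma step_y {s : St} (h : SInv s) :
    (s.M : ℝ) * s.x + s.n ≤ ((step s).M : ℝ) * (step s).x := by
  obtain ⟨h1, h2, h3⟩ := h
  have hn : (0:ℝ) < s.n := by exact_mod_cast h1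
  have hM : (0:ℝ) < s.M := by exact_mod_cast h2
  by_cases hb : s.x < (s.n : ℝ)
  · simp only [step, hb, if_true]
    have hMn : (0:ℝ) < ((s.M + s.n ^ 2 : ℕ) : ℝ) := by positivity
    have key : ((s.M + s.n ^ 2 : ℕ) : ℝ) * (s.x + 1 / ((s.n : ℝ) * ((s.M + s.n ^ 2 : ℕ) : ℝ)))
        = (s.M : ℝ) * s.x + (s.n:ℝ)^2 * s.x + 1 / s.n := by
      push_cast
      field_simp
    rw [key]
    have h4 : (s.n:ℝ)^2 * (1 / s.n) ≤ (s.n:ℝ)^2 * s.x :=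
      mul_le_mul_of_nonneg_left h3 (by positivity)
    have h5 : (s.n:ℝ)^2 * (1 / s.n) = s.n := by field_simp
    have h6 : (0:ℝ) < 1 / s.n := by positivity
    linarith
  · simp only [step, hb, if_false]
    have hx : (s.n : ℝ) ≤ s.x := not_lt.1 hb
    have key : (((s.n + 1) * (⌈(s.M : ℝ) * s.x⌉₊ + s.n + 1) : ℕ) : ℝ) * (1 / ((s.n : ℝ) + 1))
        = (⌈(s.M : ℝ) * s.x⌉₊ : ℝ) + s.n + 1 := by
      push_cast
      field_simp
    rw [key]
    have := Nat.le_ceil ((s.M : ℝ) * s.x)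
    linarith

lemma step_n_mono (s : St) : s.n ≤ (step s).n := by
  by_cases hb : s.x < (s.n : ℝ) <;> simp only [step, hb, if_true, if_false] <;> omega

lemma step_stay {s : St} (h : (step s).n = s.n) :
    s.x < s.n ∧ (step s).M = s.M + s.n ^ 2 ∧
      (step s).x = s.x + 1 / ((s.n : ℝ) * ((s.M + s.n ^ 2 : ℕ) : ℝ)) := by
  by_cases hb : s.x < (s.n : ℝ)
  · refine ⟨hb, ?_, ?_⟩ <;> simp only [step, hb, if_true]
  · exfalso; simp only [step, hb, if_false] at h; omega

lemma step_jump {s : St} (h : (step s).n ≠ s.n) :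
    (s.n : ℝ) ≤ s.x ∧ (step s).n = s.n + 1 ∧ (step s).x = 1 / ((s.n : ℝ) + 1) := by
  by_cases hb : s.x < (s.n : ℝ)
  · exfalso; simp only [step, hb, if_true] at h; omega
  · refine ⟨not_lt.1 hb, ?_, ?_⟩ <;> simp only [step, hb, if_false]

lemma st_succ (k : ℕ) : st (k + 1) = step (st k) := rfl

lemma nse_mono : Monotone fun k => (st k).n :=
  monotone_nat_of_le_succ fun k => step_n_mono (st k)

lemma stage_increases (k : ℕ) : ∃ j, (st k).n < (st (k + j)).n := by
  by_contra hcon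
  push_neg at hcon
  have heq : ∀ j, (st (k + j)).n = (st k).n := fun j =>
    le_antisymm (hcon j) (nse_mono (Nat.le_add_right k j))
  have hstay : ∀ j, (st (k + j)).x < ((st k).n : ℝ) ∧
      (st (k + j + 1)).M = (st (k + j)).M + (st k).n ^ 2 ∧
      (st (k + j + 1)).x = (st (k + j)).x +
        1 / (((st k).n : ℝ) * (((st (k + j)).M + (st k).n ^ 2 : ℕ) : ℝ)) := by
    intro j
    have h : (step (st (k + j))).n = (st (k + j)).n := by
      have := heq (j + 1)
      rw [show k + (j + 1) = (k + j) + 1 by omega, st_succ] at this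
      rw [this, heq j]
    obtain ⟨ha, hb, hc⟩ := step_stay h
    rw [heq j] at ha hb hc
    exact ⟨ha, by rw [show k + j + 1 = (k+j)+1 from rfl, st_succ]; exact hb,
      by rw [show k + j + 1 = (k+j)+1 from rfl, st_succ]; exact hc⟩
  have hM : ∀ j, (st (k + j)).M = (st k).M + (st k).n ^ 2 * j := by
    intro j
    induction j with
    | zero => simp
    | succ j ih =>
      have := (hstay j).2.1
      rw [show k + (j+1) = k + j + 1 by omega, this, ih]
      ring
  set n := (st k).n with hn
  set M := (st k).M with hMk
  have h1 : 1 ≤ n := (inv_st k).1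
  have h2 : 1 ≤ M := (inv_st k).2.1
  have hnR : (0:ℝ) < n := by exact_mod_cast h1
  have hMR : (0:ℝ) < M := by exact_mod_cast h2
  set c : ℝ := 1 / ((n : ℝ) * ((M : ℝ) + (n:ℝ) ^ 2)) with hc
  have hcpos : 0 < c := by rw [hc]; positivity
  have hx : ∀ j, (st k).x + c * ∑ i ∈ Finset.range j, (1 / ((i:ℝ) + 1)) ≤ (st (k + j)).x := by
    intro j
    induction j with
    | zero => simp
    | succ j ih =>
      have hstep := (hstay j).2.2
      have hMj : (((st (k + j)).M + n ^ 2 : ℕ) : ℝ) = (M : ℝ) + (n:ℝ)^2 * ((j:ℝ) + 1) := by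
        rw [hM j]; push_cast; ring
      have hterm : c * (1 / ((j:ℝ) + 1)) ≤
          1 / ((n : ℝ) * (((st (k + j)).M + n ^ 2 : ℕ) : ℝ)) := by
        rw [hMj, hc]
        rw [div_mul_div_comm, one_mul]
        apply one_div_le_one_div_of_le
        · positivity
        · have hj : (0:ℝ) ≤ (j:ℝ) := Nat.cast_nonneg j
          nlinarith [mul_nonneg (mul_nonneg hnR.le hMR.le) hj]
      rw [Finset.sum_range_succ, show k + (j+1) = k + j + 1 by omega, hstep]
      have := mul_le_mul_of_nonneg_left (le_refl (1 / ((j:ℝ)+1))) hcpos.le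
      linarith [hterm, ih]
  have hdiv : Tendsto (fun j => (st k).x + c * ∑ i ∈ Finset.range j, (1 / ((i:ℝ) + 1)))
      atTop atTop := by
    apply tendsto_atTop_add_const_left
    exact (Real.tendsto_sum_range_one_div_nat_succ_atTop).const_mul_atTop hcpos
  obtain ⟨j, hj⟩ := (tendsto_atTop.1 hdiv (n : ℝ)).exists
  have := hx j
  have := (hstay j).1
  linarith

lemma escapes (N : ℕ) : ∀ k, ∃ k', k ≤ k' ∧ N ≤ (st k').n := by
  induction N with
  | zero => intro k; exact ⟨k, le_refl k, Nat.zero_le _⟩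
  | succ N ih =>
    intro k
    obtain ⟨k', hk', hN⟩ := ih k
    obtain ⟨j, hj⟩ := stage_increases k'
    exact ⟨k' + j, by omega, by omega⟩

lemma nse_tendsto : Tendsto (fun k => (st k).n) atTop atTop := by
  refine tendsto_atTop_atTop.2 fun N => ?_
  obtain ⟨k', _, hN⟩ := escapes N 0
  exact ⟨k', fun a ha => le_trans hN (nse_mono ha)⟩

lemma ivt (f : ℕ → ℝ) (s : ℝ) : ∀ b a, a ≤ b → f a ≤ s → s < f b →
    ∃ j, a ≤ j ∧ j < b ∧ f j ≤ s ∧ s < f (j + 1) := by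
  intro b
  induction b with
  | zero =>
    intro a ha h1 h2
    interval_cases a
    exact absurd (lt_of_le_of_lt h1 h2) (lt_irrefl _)
  | succ b ih =>
    intro a ha h1 h2
    by_cases hab : a = b + 1
    · subst hab; exact absurd (lt_of_le_of_lt h1 h2) (lt_irrefl _)
    · have hab' : a ≤ b := by omega
      by_cases hfb : f b ≤ s
      · exact ⟨b, hab', Nat.lt_succ_self b, hfb, h2⟩
      · obtain ⟨j, hj1, hj2, hj3⟩ := ih a hab' h1 (not_le.1 hfb)
        exact ⟨j, hj1, by omega, hj3⟩

lemma hMgap (k : ℕ) : (st k).M + (st k).n ^ 2 ≤ (st (k + 1)).M := by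
  rw [st_succ]; exact step_M (inv_st k)

lemma hygap (k : ℕ) : ((st k).M : ℝ) * (st k).x + (st k).n ≤
    ((st (k + 1)).M : ℝ) * (st (k + 1)).x := by
  rw [st_succ]; exact step_y (inv_st k)

theorem stmt_15 :
    ∃ (M : ℕ → ℕ) (x : ℕ → ℝ),
      (∀ k, 20 ≤ k → 0 < M k ∧ 0 < x k) ∧
      (∀ k, 20 ≤ k → M k < M (k + 1)) ∧
      Filter.Tendsto (fun k => (M (k + 1) : ℝ) - M k) Filter.atTop Filter.atTop ∧
      (∀ k, 20 ≤ k → (M k : ℝ) * x k < (M (k + 1) : ℝ) * x (k + 1)) ∧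
      Filter.Tendsto (fun k => (M (k + 1) : ℝ) * x (k + 1) - (M k : ℝ) * x k)
        Filter.atTop Filter.atTop ∧
      (∀ s : ℝ, 0 < s → ∀ δ : ℝ, 0 < δ → ∀ K : ℕ,
        ∃ k, K < k ∧ 20 ≤ k ∧ |s - x k| < δ / M k) := by
  refine ⟨fun k => (st k).M, fun k => (st k).x, ?_, ?_, ?_, ?_, ?_, ?_⟩
  · intro k _
    obtain ⟨h1, h2, h3⟩ := inv_st k
    have hn : (0:ℝ) < (st k).n := by exact_mod_cast h1
    exact ⟨h2, lt_of_lt_of_le (by positivity) h3⟩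
  · intro k _
    have := hMgap k
    have := (inv_st k).1
    nlinarith
  · have hlow : ∀ k, ((st k).n : ℝ) ≤ ((st (k + 1)).M : ℝ) - (st k).M := by
      intro k
      have h := hMgap k
      have h1 := (inv_st k).1
      have : ((st k).M : ℝ) + ((st k).n : ℝ) ^ 2 ≤ (st (k + 1)).M := by exact_mod_cast h
      have hn1 : (1:ℝ) ≤ (st k).n := by exact_mod_cast h1
      nlinarith
    exact tendsto_atTop_mono hlow (tendsto_natCast_atTop_atTop.comp nse_tendsto)
  · intro k _
    have := hygap k
    have h1 := (inv_st k).1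
    have : (1:ℝ) ≤ (st k).n := by exact_mod_cast h1
    linarith
  · have hlow : ∀ k, ((st k).n : ℝ) ≤
        ((st (k + 1)).M : ℝ) * (st (k + 1)).x - ((st k).M : ℝ) * (st k).x := by
      intro k; have := hygap k; linarith
    exact tendsto_atTop_mono hlow (tendsto_natCast_atTop_atTop.comp nse_tendsto)
  · intro s hs δ hδ K
    set n0 : ℕ := ⌈s⌉₊ + ⌈1/s⌉₊ + ⌈1/δ⌉₊ + 1 with hn0
    obtain ⟨k1, hk1ge, hk1n⟩ := escapes n0 (max (K + 1) 20)
    -- k2 : least index > k1 with larger stage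
    have hex2 : ∃ k, k1 < k ∧ (st k1).n < (st k).n := by
      obtain ⟨j, hj⟩ := stage_increases k1
      have hj0 : j ≠ 0 := by rintro rfl; simp at hj
      exact ⟨k1 + j, by omega, hj⟩
    obtain ⟨k2, ⟨hk2gt, hk2n⟩, hk2min⟩ :
        ∃ k, (k1 < k ∧ (st k1).n < (st k).n) ∧
          ∀ i, i < k → ¬(k1 < i ∧ (st k1).n < (st i).n) :=
      ⟨Nat.find hex2, Nat.find_spec hex2, fun i hi => Nat.find_min hex2 hi⟩
    obtain ⟨p, hp⟩ : ∃ p, k2 = p + 1 := ⟨k2 - 1, by omega⟩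
    have hprev : (st p).n = (st k1).n := by
      rcases Nat.lt_or_ge k1 p with h | h
      · have := hk2min p (by omega)
        push_neg at this
        exact le_antisymm (this h) (nse_mono (by omega))
      · have : p = k1 := by omega
        rw [this]
    have hjump : (step (st p)).n ≠ (st p).n := by
      have h2 : (st k2).n ≠ (st p).n := by rw [hprev]; omega
      rwa [hp, st_succ] at h2
    obtain ⟨_, hjn, hjx⟩ := step_jump hjump
    set m : ℕ := (st k2).n with hmdef
    have hm_eq : m = (st p).n + 1 := by rw [hmdef, hp, st_succ, hjn]
    have hm_ge : n0 + 1 ≤ m := by rw [hm_eq, hprev]; omega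
    have hx2 : (st k2).x = 1 / (m : ℝ) := by
      rw [hp, st_succ, hjx, hm_eq]
      push_cast
      ring_nf
    -- k3 : least index > k2 with stage > m
    have hex3 : ∃ k, k2 < k ∧ (st k2).n < (st k).n := by
      obtain ⟨j, hj⟩ := stage_increases k2
      have hj0 : j ≠ 0 := by rintro rfl; simp at hj
      exact ⟨k2 + j, by omega, hj⟩
    obtain ⟨k3, ⟨hk3gt, hk3n⟩, hk3min'⟩ :
        ∃ k, (k2 < k ∧ (st k2).n < (st k).n) ∧
          ∀ i, i < k → ¬(k2 < i ∧ (st k2).n < (st i).n) :=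
      ⟨Nat.find hex3, Nat.find_spec hex3, fun i hi => Nat.find_min hex3 hi⟩
    have hk3min : ∀ j, k2 ≤ j → j < k3 → (st j).n = m := by
      intro j hj1 hj2
      rcases eq_or_lt_of_le hj1 with h | h
      · rw [← h]
      · have := hk3min' j hj2
        push_neg at this
        exact le_antisymm (this h) (nse_mono hj1)
    obtain ⟨q, hq⟩ : ∃ q, k3 = q + 1 := ⟨k3 - 1, by omega⟩
    have hprev3 : (st q).n = m := hk3min _ (by omega) (by omega)
    have hjump3 : (step (st q)).n ≠ (st q).n := by
      have h2 : (st k3).n ≠ (st q).n := by rw [hprev3]; omega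
      rwa [hq, st_succ] at h2
    obtain ⟨hxbig, -, -⟩ := step_jump hjump3
    rw [hprev3] at hxbig
    -- facts about m and s, δ
    have hmpos : (0:ℝ) < m := by
      have : 1 ≤ m := by omega
      exact_mod_cast this
    have hsle : s ≤ (⌈s⌉₊ : ℝ) := Nat.le_ceil s
    have hsm : s < (m : ℝ) := by
      have : ((⌈s⌉₊ : ℕ) : ℝ) < m := by exact_mod_cast (by omega : ⌈s⌉₊ < m)
      linarith
    have hinvs : 1 / (m : ℝ) ≤ s := by
      rw [div_le_iff₀ hmpos]
      have h1 : 1/s ≤ (⌈1/s⌉₊ : ℝ) := Nat.le_ceil _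
      have h2 : ((⌈1/s⌉₊:ℕ) : ℝ) ≤ m := by exact_mod_cast (by omega : ⌈1/s⌉₊ ≤ m)
      have h3 : 1/s ≤ (m:ℝ) := le_trans h1 h2
      rw [div_le_iff₀ hs] at h3
      linarith
    have hδm : 1 / (m : ℝ) ≤ δ := by
      rw [div_le_iff₀ hmpos]
      have h1 : 1/δ ≤ (⌈1/δ⌉₊ : ℝ) := Nat.le_ceil _
      have h2 : ((⌈1/δ⌉₊:ℕ) : ℝ) ≤ m := by exact_mod_cast (by omega : ⌈1/δ⌉₊ ≤ m)
      have h3 : 1/δ ≤ (m:ℝ) := le_trans h1 h2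
      rw [div_le_iff₀ hδ] at h3
      linarith
    -- IVT
    have hfa : (st k2).x ≤ s := by rw [hx2]; exact hinvs
    have hfb : s < (st q).x := lt_of_lt_of_le hsm hxbig
    obtain ⟨j, hj1, hj2, hj3, hj4⟩ := ivt (fun k => (st k).x) s q k2 (by omega) hfa hfb
    -- step at j is in-stage
    have hnj : (st j).n = m := hk3min j hj1 (by omega)
    have hnj1 : (st (j + 1)).n = m := hk3min (j + 1) (by omega) (by omega)
    have hstay : (step (st j)).n = (st j).n := by
      rw [← st_succ, hnj1, hnj]
    obtain ⟨-, hsM, hsx⟩ := step_stay hstay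
    rw [← st_succ] at hsM hsx
    -- bounds
    obtain ⟨h1j, h2j, -⟩ := inv_st j
    have hMj : (0:ℝ) < (st j).M := by exact_mod_cast h2j
    have hMjn : (0:ℝ) < (((st j).M + (st j).n ^ 2 : ℕ) : ℝ) := by positivity
    have hnjR : ((st j).n : ℝ) = m := by exact_mod_cast hnj
    have hj3' : (st j).x ≤ s := hj3
    have hj4' : s < (st (j + 1)).x := hj4
    have hincr : (st (j+1)).x = (st j).x +
        1 / ((m : ℝ) * (((st j).M + (st j).n ^ 2 : ℕ) : ℝ)) := by
      rw [hsx, hnjR]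
    have hlt : s - (st j).x < 1 / ((m:ℝ) * (((st j).M + (st j).n ^ 2 : ℕ) : ℝ)) := by
      rw [hincr] at hj4'
      linarith
    have hfinal : s - (st j).x < δ / (st j).M := by
      have hb1 : 1 / ((m:ℝ) * (((st j).M + (st j).n ^ 2 : ℕ) : ℝ)) ≤ 1 / ((m:ℝ) * (st j).M) := by
        apply one_div_le_one_div_of_le
        · positivity
        · apply mul_le_mul_of_nonneg_left _ hmpos.le
          push_cast
          nlinarith [sq_nonneg ((st j).n : ℝ)]
      have hb2 : 1 / ((m:ℝ) * (st j).M) ≤ δ / (st j).M := by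
        rw [div_le_div_iff₀ (by positivity) hMj]
        have h := mul_le_mul_of_nonneg_right hδm (mul_nonneg hmpos.le hMj.le)
        have heq2 : (1/(m:ℝ)) * ((m:ℝ) * (st j).M) = 1 * (st j).M := by field_simp
        linarith [h, heq2.ge, heq2.le]
      linarith
    refine ⟨j, ?_, ?_, ?_⟩
    · omega
    · omega
    · rw [abs_of_nonneg (by linarith : (0:ℝ) ≤ s - (st j).x)]
      exact hfinal
end

section
/- Let C > 0 and define M_k ≤ C·k·ln ln k for k ≥ 20, and let j(k) = k + 1 − ⌊n ln ln n⌋ for ⌊n ln ln n⌋ ≤ k < ⌊(n+1) ln ln(n+1)⌋. Then the series ∑_{k ≥ 20, j(k)=1} 1/M_k diverges whenever M_k > 0 satisfy M_k ≤ C·k·ln ln k; equivalently, ∑_{s≥20} 1/M_{⌊s ln ln s⌋} = ∞ under this bound. -/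
open Real

noncomputable def stmtF : ℕ → ℕ := fun s => Nat.floor ((s : ℝ) * Real.log (Real.log s))

noncomputable def glog : ℕ → ℝ := fun n => 1 / (((n : ℝ) + 2) * Real.log ((n : ℝ) + 2))

lemma glog_denom_pos (n : ℕ) : 0 < ((n : ℝ) + 2) * Real.log ((n : ℝ) + 2) := by
  have h1 : (1:ℝ) < (n : ℝ) + 2 := by
    have := Nat.cast_nonneg (α := ℝ) n; linarith
  exact mul_pos (by linarith) (Real.log_pos h1)

lemma glog_nonneg (n : ℕ) : 0 ≤ glog n := le_of_lt (by
  unfold glog; exact one_div_pos.mpr (glog_denom_pos n))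

lemma glog_anti : ∀ ⦃m n : ℕ⦄, 0 < m → m ≤ n → glog n ≤ glog m := by
  intro m n _ hmn
  unfold glog
  apply one_div_le_one_div_of_le (glog_denom_pos m)
  have hc : ((m:ℝ) + 2) ≤ (n:ℝ) + 2 := by
    have : (m:ℝ) ≤ n := by exact_mod_cast hmn
    linarith
  exact mul_le_mul hc (Real.log_le_log (by positivity) hc)
    (Real.log_nonneg (by linarith [Nat.cast_nonneg (α := ℝ) m])) (by positivity)

lemma not_summable_glog : ¬ Summable glog := by
  intro hs
  have hcond : Summable fun k : ℕ => (2:ℝ)^k * glog (2^k) :=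
    (summable_condensed_iff_of_nonneg glog_nonneg glog_anti).mpr hs
  have hlog2 : 0 < Real.log 2 := Real.log_pos (by norm_num)
  have key : ∀ k : ℕ, 1 / (3 * Real.log 2 * ((k:ℝ) + 2)) ≤ (2:ℝ)^k * glog (2^k) := by
    intro k
    have hpow : (1:ℝ) ≤ (2:ℝ)^k := one_le_pow₀ (by norm_num)
    have hcast : ((2^k : ℕ) : ℝ) = (2:ℝ)^k := by push_cast; ring
    have hD := glog_denom_pos (2^k)
    rw [hcast] at hD
    have hb : Real.log ((2:ℝ)^k + 2) ≤ ((k:ℝ) + 2) * Real.log 2 := by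
      have h1 : (2:ℝ)^k + 2 ≤ (2:ℝ)^(k+2) := by
        rw [pow_add]; nlinarith
      calc Real.log ((2:ℝ)^k + 2) ≤ Real.log ((2:ℝ)^(k+2)) :=
            Real.log_le_log (by positivity) h1
        _ = ((k:ℝ) + 2) * Real.log 2 := by
            rw [Real.log_pow]; push_cast; ring
    have hle : ((2:ℝ)^k + 2) * Real.log ((2:ℝ)^k + 2)
        ≤ (3 * (2:ℝ)^k) * (((k:ℝ) + 2) * Real.log 2) := by
      apply mul_le_mul (by nlinarith) hb
        (Real.log_nonneg (by nlinarith)) (by positivity)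
    have h1d : 1 / ((3 * (2:ℝ)^k) * (((k:ℝ) + 2) * Real.log 2))
        ≤ glog (2^k) := by
      unfold glog
      rw [hcast]
      exact one_div_le_one_div_of_le hD hle
    calc 1 / (3 * Real.log 2 * ((k:ℝ) + 2))
        = (2:ℝ)^k * (1 / ((3 * (2:ℝ)^k) * (((k:ℝ) + 2) * Real.log 2))) := by
          have h2 : (2:ℝ)^k ≠ 0 := by positivity
          field_simp
      _ ≤ (2:ℝ)^k * glog (2^k) := by
          apply mul_le_mul_of_nonneg_left h1d (by positivity)
  have hsum2 : Summable fun k : ℕ => 1 / (3 * Real.log 2 * ((k:ℝ) + 2)) :=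
    hcond.of_nonneg_of_le (fun k => by positivity) key
  have hsum3 : Summable fun k : ℕ => 1 / ((k:ℝ) + 2) := by
    have := hsum2.mul_left (3 * Real.log 2)
    convert this using 2 with k
    · rfl
    field_simp
  have hsum4 : Summable fun k : ℕ => 1 / (((k + 2 : ℕ)) : ℝ) := by
    convert hsum3 using 2 with k; push_cast; ring
  exact Real.not_summable_one_div_natCast ((summable_nat_add_iff 2).mp hsum4)

lemma aux_exp3_lt : Real.exp 3 < 21 := by
  have h := Real.exp_one_lt_d9
  have h3 : Real.exp 3 = (Real.exp 1)^3 := by rw [← Real.exp_nat_mul]; norm_num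
  have hp := Real.exp_pos 1
  have hc : (Real.exp 1)^3 < 2.7182818286^3 := pow_lt_pow_left₀ h hp.le (by norm_num)
  rw [h3]; nlinarith [hc]

lemma aux_log_ge_three {x : ℝ} (hx : 21 ≤ x) : 3 ≤ Real.log x := by
  rw [Real.le_log_iff_exp_le (by linarith)]
  linarith [aux_exp3_lt]

lemma aux_loglog_ge_one {x : ℝ} (hx : 21 ≤ x) : 1 ≤ Real.log (Real.log x) := by
  have h3 := aux_log_ge_three hx
  have h1 : 1 ≤ Real.log 3 := by
    rw [Real.le_log_iff_exp_le (by norm_num)]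
    have := Real.exp_one_lt_d9
    linarith
  calc (1:ℝ) ≤ Real.log 3 := h1
    _ ≤ Real.log (Real.log x) := Real.log_le_log (by norm_num) h3

lemma aux_sq_log_le {y : ℝ} (hy : 1 ≤ y) : (Real.log y)^2 ≤ y := by
  set t := Real.log y with ht
  have ht0 : 0 ≤ t := Real.log_nonneg hy
  have h4 : t/4 + 1 ≤ Real.exp (t/4) := Real.add_one_le_exp _
  have hsq : Real.exp (t/4) * Real.exp (t/4) = Real.exp (t/2) := by
    rw [← Real.exp_add]; ring_nf
  have h5 : t ≤ Real.exp (t/2) := by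
    nlinarith [Real.exp_pos (t/4), sq_nonneg (t/4 - 1)]
  have h6 : Real.exp (t/2) * Real.exp (t/2) = Real.exp t := by
    rw [← Real.exp_add]; ring_nf
  have h7 : t^2 ≤ Real.exp t := by nlinarith [Real.exp_pos (t/2)]
  rwa [ht, Real.exp_log (by linarith)] at h7

lemma stmtF_ge {s : ℕ} (hs : 21 ≤ s) : s ≤ stmtF s := by
  have hs' : (21:ℝ) ≤ (s:ℝ) := by exact_mod_cast hs
  have hL := aux_loglog_ge_one hs'
  exact Nat.le_floor (by nlinarith)

lemma stmtF_lt_succ {s : ℕ} (hs : 21 ≤ s) : stmtF s < stmtF (s + 1) := by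
  have hs' : (21:ℝ) ≤ (s:ℝ) := by exact_mod_cast hs
  have hL := aux_loglog_ge_one hs'
  have hlog3 := aux_log_ge_three hs'
  have hfl : (stmtF s : ℝ) ≤ (s:ℝ) * Real.log (Real.log s) :=
    Nat.floor_le (by nlinarith)
  have hLmono : Real.log (Real.log (s:ℝ)) ≤ Real.log (Real.log ((s:ℝ)+1)) := by
    apply Real.log_le_log (by linarith)
    exact Real.log_le_log (by linarith) (by linarith)
  have key : ((stmtF s + 1 : ℕ) : ℝ) ≤ ((s+1:ℕ):ℝ) * Real.log (Real.log ((s+1:ℕ):ℝ)) := by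
    push_cast
    nlinarith
  have h2 := Nat.le_floor key
  unfold stmtF at h2 ⊢
  omega

lemma stmtF_Mbound {C : ℝ} (hC : 0 < C) {M : ℕ → ℝ}
    (hMle : ∀ k : ℕ, 20 ≤ k → M k ≤ C * k * Real.log (Real.log k))
    {s : ℕ} (hs : 21 ≤ s) : M (stmtF s) ≤ 2 * C * s * Real.log s := by
  have hs' : (21:ℝ) ≤ (s:ℝ) := by exact_mod_cast hs
  have hF : 21 ≤ stmtF s := le_trans hs (stmtF_ge hs)
  have hF' : (21:ℝ) ≤ (stmtF s : ℝ) := by exact_mod_cast hF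
  have hle := hMle (stmtF s) (by omega)
  set Ls := Real.log (Real.log (s:ℝ)) with hLs
  have hL1 : 1 ≤ Ls := aux_loglog_ge_one hs'
  have hlog3 : 3 ≤ Real.log (s:ℝ) := aux_log_ge_three hs'
  have hfl : (stmtF s : ℝ) ≤ (s:ℝ) * Ls := Nat.floor_le (by nlinarith)
  have hLle : Ls ≤ Real.log (s:ℝ) := Real.log_le_self (by linarith)
  have hlogf : Real.log (stmtF s) ≤ 2 * Real.log (s:ℝ) := by
    have h1 : Real.log (stmtF s) ≤ Real.log ((s:ℝ) * Ls) :=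
      Real.log_le_log (by linarith) hfl
    rw [Real.log_mul (by linarith) (by linarith)] at h1
    have h2 : Real.log Ls ≤ Ls := Real.log_le_self (by linarith)
    linarith
  have hllf : Real.log (Real.log (stmtF s)) ≤ 2 * Ls := by
    have hlf3 : 3 ≤ Real.log ((stmtF s : ℕ) : ℝ) := aux_log_ge_three hF'
    have h1 : Real.log (Real.log (stmtF s)) ≤ Real.log (2 * Real.log (s:ℝ)) :=
      Real.log_le_log (by linarith) hlogf
    rw [Real.log_mul two_ne_zero (by linarith)] at h1
    have h2 : Real.log 2 ≤ 1 := by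
      have := Real.log_le_sub_one_of_pos (x := 2) (by norm_num); linarith
    linarith
  have hsq : Ls^2 ≤ Real.log (s:ℝ) := aux_sq_log_le (by linarith)
  have hllf1 : 1 ≤ Real.log (Real.log (stmtF s)) := aux_loglog_ge_one hF'
  have hA : (stmtF s : ℝ) * Real.log (Real.log (stmtF s)) ≤ ((s:ℝ) * Ls) * (2 * Ls) :=
    mul_le_mul hfl hllf (by linarith) (by nlinarith)
  have h2Cs : (0:ℝ) ≤ 2 * C * (s:ℝ) := by nlinarith
  calc M (stmtF s) ≤ C * (stmtF s) * Real.log (Real.log (stmtF s)) := hle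
    _ = C * ((stmtF s : ℝ) * Real.log (Real.log (stmtF s))) := by ring
    _ ≤ C * (((s:ℝ) * Ls) * (2 * Ls)) := mul_le_mul_of_nonneg_left hA hC.le
    _ = 2 * C * (s:ℝ) * Ls^2 := by ring
    _ ≤ 2 * C * (s:ℝ) * Real.log (s:ℝ) := mul_le_mul_of_nonneg_left hsq h2Cs

lemma core_not_summable {C : ℝ} (hC : 0 < C) {M : ℕ → ℝ}
    (hMpos : ∀ k, 20 ≤ k → 0 < M k)
    (hMle : ∀ k : ℕ, 20 ≤ k → M k ≤ C * k * Real.log (Real.log k)) :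
    ¬ Summable (fun s : ℕ => 1 / M (stmtF (s + 21))) := by
  intro hs
  have hb : ∀ s : ℕ,
      1 / (2 * C * ((s+21:ℕ):ℝ) * Real.log ((s+21:ℕ))) ≤ 1 / M (stmtF (s + 21)) := by
    intro s
    have h20 : 20 ≤ stmtF (s+21) := by
      have := stmtF_ge (s := s+21) (by omega); omega
    exact one_div_le_one_div_of_le (hMpos _ h20) (stmtF_Mbound hC hMle (by omega))
  have hnn : ∀ s : ℕ, 0 ≤ 1 / (2 * C * ((s+21:ℕ):ℝ) * Real.log ((s+21:ℕ))) := by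
    intro s
    have h3 : (3:ℝ) ≤ Real.log ((s+21:ℕ):ℝ) := by
      apply aux_log_ge_three; push_cast; linarith [Nat.cast_nonneg (α := ℝ) s]
    have : (0:ℝ) < ((s+21:ℕ):ℝ) := by push_cast; linarith [Nat.cast_nonneg (α := ℝ) s]
    positivity
  have hsum := hs.of_nonneg_of_le hnn hb
  have hsum2 : Summable (fun s : ℕ => glog (s + 19)) := by
    have h2 := hsum.mul_left (2 * C)
    apply h2.congr
    intro s
    unfold glog
    have hlogpos : (0:ℝ) < Real.log ((s+21:ℕ):ℝ) := by
      have : (3:ℝ) ≤ Real.log ((s+21:ℕ):ℝ) := by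
        apply aux_log_ge_three; push_cast; linarith [Nat.cast_nonneg (α := ℝ) s]
      linarith
    have hcast : ((s+19:ℕ):ℝ) + 2 = ((s+21:ℕ):ℝ) := by push_cast; ring
    rw [hcast]
    have hC' : C ≠ 0 := hC.ne'
    have hd2 : (0:ℝ) < ((s+21:ℕ):ℝ) * Real.log ((s+21:ℕ)) := by
      apply mul_pos _ hlogpos
      push_cast; positivity
    have hd1 : (0:ℝ) < 2 * C * ((s+21:ℕ):ℝ) * Real.log ((s+21:ℕ)) := by
      have h21 : (0:ℝ) < ((s+21:ℕ):ℝ) := by push_cast; positivity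
      have := mul_pos (mul_pos (by linarith : (0:ℝ) < 2 * C) h21) hlogpos
      linarith
    rw [mul_one_div, div_eq_div_iff hd1.ne' hd2.ne']
    ring
  exact not_summable_glog ((summable_nat_add_iff 19).mp hsum2)

theorem stmt_19 (C : ℝ) (hC : 0 < C) (M : ℕ → ℝ)
    (hMpos : ∀ k, 20 ≤ k → 0 < M k)
    (hMle : ∀ k : ℕ, 20 ≤ k → M k ≤ C * k * Real.log (Real.log k))
    (j : ℕ → ℕ)
    (hj : ∀ k, 20 ≤ k → ∀ n : ℕ,
      Nat.floor ((n : ℝ) * Real.log (Real.log n)) ≤ k →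
      k < Nat.floor (((n : ℝ) + 1) * Real.log (Real.log ((n : ℝ) + 1))) →
      j k = k + 1 - Nat.floor ((n : ℝ) * Real.log (Real.log n))) :
    (¬ Summable (fun k : ℕ => if 20 ≤ k ∧ j k = 1 then 1 / M k else 0)) ∧
    ¬ Summable (fun s : ℕ =>
      if 20 ≤ s then 1 / M (Nat.floor ((s : ℝ) * Real.log (Real.log s))) else 0) := by
  have hcore := core_not_summable hC hMpos hMle
  constructor
  · intro h1
    apply hcore
    have hinj : Function.Injective (fun s : ℕ => stmtF (s + 21)) := by
      apply StrictMono.injective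
      apply strictMono_nat_of_lt_succ
      intro s
      have h := stmtF_lt_succ (s := s + 21) (by omega)
      simpa [Nat.add_right_comm] using h
    have h2 := h1.comp_injective hinj
    apply h2.congr
    intro s
    simp only [Function.comp]
    have h20 : 20 ≤ stmtF (s + 21) := by
      have := stmtF_ge (s := s + 21) (by omega); omega
    have hle1 : Nat.floor (((s+21:ℕ) : ℝ) * Real.log (Real.log ((s+21:ℕ)))) ≤ stmtF (s + 21) :=
      le_refl _
    have hlt : stmtF (s + 21) <
        Nat.floor ((((s+21:ℕ) : ℝ) + 1) * Real.log (Real.log (((s+21:ℕ) : ℝ) + 1))) := by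
      have h := stmtF_lt_succ (s := s + 21) (by omega)
      have hcast : ((s+21:ℕ):ℝ) + 1 = ((s+22:ℕ):ℝ) := by push_cast; ring
      rw [hcast]
      exact h
    have hjj := hj (stmtF (s + 21)) h20 (s + 21) hle1 hlt
    have hjone : j (stmtF (s + 21)) = 1 := by
      rw [hjj]
      have : Nat.floor (((s+21:ℕ) : ℝ) * Real.log (Real.log ((s+21:ℕ)))) = stmtF (s + 21) := rfl
      omega
    rw [if_pos ⟨h20, hjone⟩]
  · intro h2
    apply hcore
    have h3 := (summable_nat_add_iff 21).mpr h2
    apply h3.congr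
    intro s
    rw [if_pos (by omega)]
    rfl
end
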